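/- arXiv:1902.05482 — 5 statements merged into one kernel-verified Lean document; each statement's English description precedes it below -/
import Mathlib

section
/- Under monotonicity and unconfoundedness, the false-negative probability satisfies P(f(X) = -1, R = +1) = (1/4)·E[(1 - f(X))·Y·T/Q] for any measurable classifier f : ℝ^p → {-1, +1}. -/
open MeasureTheory ProbabilityTheory ENNReal


lemma lemA {Ω : Type*} {m m0 : MeasurableSpace Ω} (hm : m ≤ m0)
    (μ : Measure Ω) [IsFiniteMeasure μ]
    {g : Ω → ℝ} (hg : Integrable g μ) (hg0 : 0 ≤ᵐ[μ] g)
    {H : Ω → ℝ≥0∞} (hH : Measurable[m] H) :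
    ∫⁻ ω, H ω * ENNReal.ofReal (g ω) ∂μ
      = ∫⁻ ω, H ω * ENNReal.ofReal ((μ[g|m]) ω) ∂μ := by
  haveI : SigmaFinite (μ.trim hm) := inferInstance
  have hgae : AEMeasurable (fun ω => ENNReal.ofReal (g ω)) μ :=
    ENNReal.measurable_ofReal.comp_aemeasurable hg.aemeasurable
  have hce : Measurable (fun ω => ENNReal.ofReal ((μ[g|m]) ω)) :=
    ENNReal.measurable_ofReal.comp (stronglyMeasurable_condExp.mono hm).measurable
  refine @Measurable.ennreal_induction Ω m
    (fun H => ∫⁻ ω, H ω * ENNReal.ofReal (g ω) ∂μ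
      = ∫⁻ ω, H ω * ENNReal.ofReal ((μ[g|m]) ω) ∂μ) ?_ ?_ ?_ H hH
  · intro c s hs
    have hs0 : MeasurableSet s := hm _ hs
    have h1 : ∀ (G : Ω → ℝ), AEMeasurable (fun ω => ENNReal.ofReal (G ω)) μ →
        ∫⁻ ω, s.indicator (fun _ => c) ω * ENNReal.ofReal (G ω) ∂μ
        = c * ∫⁻ ω in s, ENNReal.ofReal (G ω) ∂μ := by
      intro G hG
      have heq : (fun ω => s.indicator (fun _ => c) ω * ENNReal.ofReal (G ω))
          = s.indicator (fun ω => c * ENNReal.ofReal (G ω)) := by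
        ext ω; by_cases h : ω ∈ s <;> simp [h]
      rw [heq, lintegral_indicator hs0, lintegral_const_mul'' c hG.restrict]
    rw [h1 _ hgae, h1 _ hce.aemeasurable]
    congr 1
    rw [← ofReal_integral_eq_lintegral_ofReal hg.integrableOn (ae_restrict_of_ae hg0),
      ← ofReal_integral_eq_lintegral_ofReal integrable_condExp.integrableOn
        (ae_restrict_of_ae (condExp_nonneg hg0)),
      setIntegral_condExp hm hg hs]
  · intro F G hdisj hF hG hPF hPG
    simp only [Pi.add_apply, add_mul]
    rw [lintegral_add_left' (f := fun ω => F ω * ENNReal.ofReal (g ω))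
        ((hF.mono hm le_rfl).aemeasurable.mul hgae),
      lintegral_add_left' (f := fun ω => F ω * ENNReal.ofReal ((μ[g|m]) ω))
        ((hF.mono hm le_rfl).aemeasurable.mul hce.aemeasurable), hPF, hPG]
  · intro F hF hmono hP
    simp_rw [ENNReal.iSup_mul]
    rw [lintegral_iSup' (f := fun n ω => F n ω * ENNReal.ofReal (g ω))
        (fun n => ((hF n).mono hm le_rfl).aemeasurable.mul hgae)
        (Filter.Eventually.of_forall fun ω i j hij => mul_le_mul_left (hmono hij ω) _),
      lintegral_iSup' (f := fun n ω => F n ω * ENNReal.ofReal ((μ[g|m]) ω))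
        (fun n => ((hF n).mono hm le_rfl).aemeasurable.mul hce.aemeasurable)
        (Filter.Eventually.of_forall fun ω i j hij => mul_le_mul_left (hmono hij ω) _)]
    exact iSup_congr hP

lemma lemB {Ω : Type*} {m m0 : MeasurableSpace Ω} (hm : m ≤ m0)
    (μ : Measure Ω) [IsProbabilityMeasure μ]
    {N A B : Set Ω} (hN : MeasurableSet[m] N) (hA : MeasurableSet A) (hB : MeasurableSet B)
    {d : Ω → ℝ} (hd : Measurable[m] d) (hd0 : ∀ ω, 0 < d ω)
    (hcond : (μ[(A ∩ B).indicator (fun _ => (1:ℝ)) | m]) =ᵐ[μ]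
      fun ω => (μ[A.indicator (fun _ => (1:ℝ)) | m]) ω * d ω) :
    Integrable (fun ω => (N ∩ A ∩ B).indicator (fun _ => (1:ℝ)) ω / d ω) μ ∧
    ∫ ω, (N ∩ A ∩ B).indicator (fun _ => (1:ℝ)) ω / d ω ∂μ = (μ (N ∩ A)).toReal := by
  set F : Ω → ℝ := fun ω => (N ∩ A ∩ B).indicator (fun _ => (1:ℝ)) ω / d ω with hF
  have hF0 : ∀ ω, 0 ≤ F ω := fun ω =>
    div_nonneg (Set.indicator_nonneg (fun _ _ => zero_le_one) ω) (hd0 ω).le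
  have hFmeas : Measurable F :=
    ((measurable_const.indicator (((hm _ hN).inter hA).inter hB))).div (hd.mono hm le_rfl)
  set h : Ω → ℝ≥0∞ := fun ω => N.indicator (fun ω' => ENNReal.ofReal (1 / d ω')) ω with hh
  have hhmeas : Measurable[m] h :=
    (ENNReal.measurable_ofReal.comp ((measurable_const (a := (1:ℝ))).div hd)).indicator hN
  set g : Ω → ℝ := (A ∩ B).indicator (fun _ => (1:ℝ)) with hgdef
  have hgint : Integrable g μ := (integrable_const 1).indicator (hA.inter hB)
  have hg0 : 0 ≤ᵐ[μ] g :=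
    Filter.Eventually.of_forall (Set.indicator_nonneg (fun _ _ => zero_le_one))
  have claim1 : ∀ ω, ENNReal.ofReal (F ω) = h ω * ENNReal.ofReal (g ω) := by
    intro ω
    by_cases hωN : ω ∈ N
    · by_cases hωAB : ω ∈ A ∩ B
      · have : ω ∈ N ∩ A ∩ B := ⟨⟨hωN, hωAB.1⟩, hωAB.2⟩
        simp [hF, hh, hgdef, Set.indicator_of_mem, this, hωN, hωAB]
      · have : ω ∉ N ∩ A ∩ B := fun h' => hωAB ⟨h'.1.2, h'.2⟩
        simp [hF, hh, hgdef, Set.indicator_of_notMem, this, hωAB]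
    · have : ω ∉ N ∩ A ∩ B := fun h' => hωN h'.1.1
      simp [hF, hh, hgdef, Set.indicator_of_notMem, this, hωN]
  have key : ∫⁻ ω, ENNReal.ofReal (F ω) ∂μ = ENNReal.ofReal ((μ (N ∩ A)).toReal) := by
    calc ∫⁻ ω, ENNReal.ofReal (F ω) ∂μ = ∫⁻ ω, h ω * ENNReal.ofReal (g ω) ∂μ := by
          simp_rw [claim1]
      _ = ∫⁻ ω, h ω * ENNReal.ofReal ((μ[g|m]) ω) ∂μ := lemA hm μ hgint hg0 hhmeas
      _ = ∫⁻ ω, N.indicator (fun ω' => ENNReal.ofReal ((μ[A.indicator (fun _ => (1:ℝ))|m]) ω')) ω ∂μ := by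
          refine lintegral_congr_ae ?_
          filter_upwards [hcond] with ω hω
          by_cases hωN : ω ∈ N
          · simp only [hh, Set.indicator_of_mem hωN, hω]
            rw [← ENNReal.ofReal_mul (one_div_pos.mpr (hd0 ω)).le]
            congr 1
            field_simp [(hd0 ω).ne']
          · simp [hh, Set.indicator_of_notMem hωN]
      _ = ∫⁻ ω in N, ENNReal.ofReal ((μ[A.indicator (fun _ => (1:ℝ))|m]) ω) ∂μ :=
          lintegral_indicator (hm _ hN) _
      _ = ENNReal.ofReal (∫ ω in N, (μ[A.indicator (fun _ => (1:ℝ))|m]) ω ∂μ) :=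
          (ofReal_integral_eq_lintegral_ofReal integrable_condExp.integrableOn
            (ae_restrict_of_ae (condExp_nonneg
              (Filter.Eventually.of_forall
                (Set.indicator_nonneg (fun _ _ => zero_le_one)))))).symm
      _ = ENNReal.ofReal ((μ (N ∩ A)).toReal) := by
          rw [setIntegral_condExp hm ((integrable_const 1).indicator hA) hN,
            setIntegral_indicator hA]
          simp [Measure.restrict_apply (hm _ hN), Set.inter_comm]
  have hfin : Integrable F μ := by
    refine ⟨hFmeas.aestronglyMeasurable, ?_⟩
    rw [hasFiniteIntegral_iff_ofReal (Filter.Eventually.of_forall hF0), key]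
    exact ENNReal.ofReal_lt_top
  refine ⟨hfin, ?_⟩
  rw [integral_eq_lintegral_of_nonneg_ae (Filter.Eventually.of_forall hF0)
    hFmeas.aestronglyMeasurable, key, ENNReal.toReal_ofReal ENNReal.toReal_nonneg]

lemma auxmain {Ω : Type*} (m : MeasurableSpace Ω) [MeasurableSpace Ω] [StandardBorelSpace Ω]
    (μ : Measure Ω) [IsProbabilityMeasure μ]
    (Yp Ym T : Ω → ℝ) (hYp : Measurable Yp) (hYm : Measurable Ym) (hT : Measurable T)
    (hYpv : ∀ ω, Yp ω = 1 ∨ Yp ω = -1) (hYmv : ∀ ω, Ym ω = 1 ∨ Ym ω = -1)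
    (hTv : ∀ ω, T ω = 1 ∨ T ω = -1)
    (mono : ∀ ω, Ym ω ≤ Yp ω)
    (hm : m ≤ ‹MeasurableSpace Ω›)
    (unconf : CondIndepFun m hm (fun ω => (Yp ω, Ym ω)) T μ)
    (eX : Ω → ℝ) (heXmeas : Measurable[m] eX)
    (heX : eX =ᵐ[μ] μ[{ω | T ω = 1}.indicator (fun _ => (1 : ℝ)) | m])
    (heXb : ∀ ω, 0 < eX ω ∧ eX ω < 1)
    (Q : Ω → ℝ) (hQ : ∀ ω, Q ω = 1 / 2 + (eX ω - 1 / 2) * T ω)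
    (Y : Ω → ℝ) (hY : ∀ ω, Y ω = if T ω = 1 then Yp ω else Ym ω)
    (N : Set Ω) (hN : MeasurableSet[m] N) :
    (μ (N ∩ {ω | Ym ω < Yp ω})).toReal
      = (1 / 4) * ∫ ω, N.indicator (fun _ => (2:ℝ)) ω * (Y ω * T ω / Q ω) ∂μ := by
  set YY : Ω → ℝ × ℝ := fun ω => (Yp ω, Ym ω) with hYYdef
  have hYY : Measurable YY := hYp.prodMk hYm
  set A1 : Set Ω := YY ⁻¹' {x | x.1 = 1} with hA1def
  set A2 : Set Ω := YY ⁻¹' {x | x.1 = -1} with hA2def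
  set A3 : Set Ω := YY ⁻¹' {x | x.2 = 1} with hA3def
  set A4 : Set Ω := YY ⁻¹' {x | x.2 = -1} with hA4def
  have hs1 : MeasurableSet {x : ℝ × ℝ | x.1 = 1} := measurable_fst (measurableSet_singleton 1)
  have hs2 : MeasurableSet {x : ℝ × ℝ | x.1 = -1} := measurable_fst (measurableSet_singleton (-1))
  have hs3 : MeasurableSet {x : ℝ × ℝ | x.2 = 1} := measurable_snd (measurableSet_singleton 1)
  have hs4 : MeasurableSet {x : ℝ × ℝ | x.2 = -1} := measurable_snd (measurableSet_singleton (-1))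
  have hA1 : MeasurableSet A1 := hYY hs1
  have hA2 : MeasurableSet A2 := hYY hs2
  have hA3 : MeasurableSet A3 := hYY hs3
  have hA4 : MeasurableSet A4 := hYY hs4
  have hA1mem : ∀ ω, ω ∈ A1 ↔ Yp ω = 1 := fun ω => Iff.rfl
  have hA2mem : ∀ ω, ω ∈ A2 ↔ Yp ω = -1 := fun ω => Iff.rfl
  have hA3mem : ∀ ω, ω ∈ A3 ↔ Ym ω = 1 := fun ω => Iff.rfl
  have hA4mem : ∀ ω, ω ∈ A4 ↔ Ym ω = -1 := fun ω => Iff.rfl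
  set Bp : Set Ω := T ⁻¹' {1} with hBpdef
  set Bm : Set Ω := T ⁻¹' {-1} with hBmdef
  have hBp : MeasurableSet Bp := hT (measurableSet_singleton _)
  have hBm : MeasurableSet Bm := hT (measurableSet_singleton _)
  have hBpmem : ∀ ω, ω ∈ Bp ↔ T ω = 1 := fun ω => Iff.rfl
  have hBmmem : ∀ ω, ω ∈ Bm ↔ T ω = -1 := fun ω => Iff.rfl
  -- conditional independence
  have hCI := (condIndepFun_iff_condExp_inter_preimage_eq_mul
    (m' := m) (hm' := hm) (μ := μ) hYY hT).mp unconf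
  -- e relations
  have he1 : (μ⟦Bp|m⟧) =ᵐ[μ] eX := by
    have : {ω | T ω = 1} = Bp := by ext ω; simp [hBpdef]
    rw [← this]
    exact heX.symm
  have he2 : (μ⟦Bm|m⟧) =ᵐ[μ] fun ω => 1 - eX ω := by
    have hind : Bm.indicator (fun _ => (1:ℝ)) =
        (fun _ => (1:ℝ)) - Bp.indicator (fun _ => (1:ℝ)) := by
      ext ω
      rcases hTv ω with h | h
      · have h1 : ω ∉ Bm := fun hh => by
          have h2 : T ω = -1 := (hBmmem ω).mp hh
          rw [h] at h2; norm_num at h2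
        have h2 : ω ∈ Bp := (hBpmem ω).mpr h
        simp [Set.indicator_of_notMem h1, Set.indicator_of_mem h2]
      · have h1 : ω ∈ Bm := (hBmmem ω).mpr h
        have h2 : ω ∉ Bp := fun hh => by
          have h3 : T ω = 1 := (hBpmem ω).mp hh
          rw [h] at h3; norm_num at h3
        simp [Set.indicator_of_mem h1, Set.indicator_of_notMem h2]
    calc (μ⟦Bm|m⟧)
        =ᵐ[μ] μ[(fun _ => (1:ℝ)) - Bp.indicator (fun _ => (1:ℝ))|m] := by rw [hind]
      _ =ᵐ[μ] μ[(fun _ => (1:ℝ))|m] - μ[Bp.indicator (fun _ => (1:ℝ))|m] :=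
          condExp_sub (integrable_const 1) ((integrable_const 1).indicator hBp) m
      _ =ᵐ[μ] fun ω => 1 - eX ω := by
          filter_upwards [he1] with ω h2
          simp only [Pi.sub_apply, h2]
          rw [condExp_const hm (1:ℝ)]
  have hd0p : ∀ ω, 0 < eX ω := fun ω => (heXb ω).1
  have hd0m : ∀ ω, 0 < 1 - eX ω := fun ω => by linarith [(heXb ω).2]
  have hdm : Measurable[m] (fun ω => 1 - eX ω) := measurable_const.sub heXmeas
  -- the four conditional expectation identities
  have cond1 : (μ[(A1 ∩ Bp).indicator (fun _ => (1:ℝ))|m]) =ᵐ[μ]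
      fun ω => (μ[A1.indicator (fun _ => (1:ℝ))|m]) ω * eX ω := by
    filter_upwards [hCI _ _ hs1 (measurableSet_singleton 1), he1] with ω h1 h2
    rw [h1, h2]
  have cond2 : (μ[(A2 ∩ Bp).indicator (fun _ => (1:ℝ))|m]) =ᵐ[μ]
      fun ω => (μ[A2.indicator (fun _ => (1:ℝ))|m]) ω * eX ω := by
    filter_upwards [hCI _ _ hs2 (measurableSet_singleton 1), he1] with ω h1 h2
    rw [h1, h2]
  have cond3 : (μ[(A3 ∩ Bm).indicator (fun _ => (1:ℝ))|m]) =ᵐ[μ]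
      fun ω => (μ[A3.indicator (fun _ => (1:ℝ))|m]) ω * (1 - eX ω) := by
    filter_upwards [hCI _ _ hs3 (measurableSet_singleton (-1)), he2] with ω h1 h2
    rw [h1, h2]
  have cond4 : (μ[(A4 ∩ Bm).indicator (fun _ => (1:ℝ))|m]) =ᵐ[μ]
      fun ω => (μ[A4.indicator (fun _ => (1:ℝ))|m]) ω * (1 - eX ω) := by
    filter_upwards [hCI _ _ hs4 (measurableSet_singleton (-1)), he2] with ω h1 h2
    rw [h1, h2]
  -- lemB applications
  obtain ⟨int1, eq1⟩ := lemB hm μ hN hA1 hBp heXmeas hd0p cond1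
  obtain ⟨int2, eq2⟩ := lemB hm μ hN hA2 hBp heXmeas hd0p cond2
  obtain ⟨int3, eq3⟩ := lemB hm μ hN hA3 hBm hdm hd0m cond3
  obtain ⟨int4, eq4⟩ := lemB hm μ hN hA4 hBm hdm hd0m cond4
  set F1 : Ω → ℝ := fun ω => (N ∩ A1 ∩ Bp).indicator (fun _ => (1:ℝ)) ω / eX ω with hF1
  set F2 : Ω → ℝ := fun ω => (N ∩ A2 ∩ Bp).indicator (fun _ => (1:ℝ)) ω / eX ω with hF2
  set F3 : Ω → ℝ := fun ω => (N ∩ A3 ∩ Bm).indicator (fun _ => (1:ℝ)) ω / (1 - eX ω) with hF3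
  set F4 : Ω → ℝ := fun ω => (N ∩ A4 ∩ Bm).indicator (fun _ => (1:ℝ)) ω / (1 - eX ω) with hF4
  -- pointwise identity for the integrand
  have hpt : ∀ ω, N.indicator (fun _ => (2:ℝ)) ω * (Y ω * T ω / Q ω)
      = 2 * (F1 ω - F2 ω - F3 ω + F4 ω) := by
    intro ω
    have hQω := hQ ω
    have hYω := hY ω
    have he0 := (heXb ω).1
    have he1' := (heXb ω).2
    by_cases hNω : ω ∈ N
    swap
    · have h1 : ω ∉ N ∩ A1 ∩ Bp := fun h => hNω h.1.1
      have h2 : ω ∉ N ∩ A2 ∩ Bp := fun h => hNω h.1.1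
      have h3 : ω ∉ N ∩ A3 ∩ Bm := fun h => hNω h.1.1
      have h4 : ω ∉ N ∩ A4 ∩ Bm := fun h => hNω h.1.1
      simp [hF1, hF2, hF3, hF4, Set.indicator_of_notMem, h1, h2, h3, h4, hNω]
    rcases hTv ω with hTω | hTω
    · have hBpω : ω ∈ Bp := (hBpmem ω).mpr hTω
      have hBmω : ω ∉ Bm := fun hh => by
        have h2 : T ω = -1 := (hBmmem ω).mp hh
        rw [hTω] at h2; norm_num at h2
      have h3 : ω ∉ N ∩ A3 ∩ Bm := fun h => hBmω h.2
      have h4 : ω ∉ N ∩ A4 ∩ Bm := fun h => hBmω h.2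
      have hQe : Q ω = eX ω := by rw [hQω, hTω]; ring
      have hYe : Y ω = Yp ω := by rw [hYω, if_pos hTω]
      rcases hYpv ω with hYpω | hYpω
      · have hm1 : ω ∈ N ∩ A1 ∩ Bp := ⟨⟨hNω, (hA1mem ω).mpr hYpω⟩, hBpω⟩
        have hm2 : ω ∉ N ∩ A2 ∩ Bp := fun h => by
          have := (hA2mem ω).mp h.1.2; rw [hYpω] at this; norm_num at this
        simp only [hF1, hF2, hF3, hF4, Set.indicator_of_mem hm1,
          Set.indicator_of_notMem hm2, Set.indicator_of_notMem h3,
          Set.indicator_of_notMem h4, Set.indicator_of_mem hNω, hYe, hTω, hQe, hYpω]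
        field_simp <;> ring_nf
      · have hm1 : ω ∉ N ∩ A1 ∩ Bp := fun h => by
          have := (hA1mem ω).mp h.1.2; rw [hYpω] at this; norm_num at this
        have hm2 : ω ∈ N ∩ A2 ∩ Bp := ⟨⟨hNω, (hA2mem ω).mpr hYpω⟩, hBpω⟩
        simp only [hF1, hF2, hF3, hF4, Set.indicator_of_mem hm2,
          Set.indicator_of_notMem hm1, Set.indicator_of_notMem h3,
          Set.indicator_of_notMem h4, Set.indicator_of_mem hNω, hYe, hTω, hQe, hYpω]
        field_simp <;> ring_nf
    · have hBpω : ω ∉ Bp := fun hh => by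
        have h2 : T ω = 1 := (hBpmem ω).mp hh
        rw [hTω] at h2; norm_num at h2
      have hBmω : ω ∈ Bm := (hBmmem ω).mpr hTω
      have h1 : ω ∉ N ∩ A1 ∩ Bp := fun h => hBpω h.2
      have h2 : ω ∉ N ∩ A2 ∩ Bp := fun h => hBpω h.2
      have hQe : Q ω = 1 - eX ω := by rw [hQω, hTω]; ring
      have hTne : ¬ (T ω = 1) := by rw [hTω]; norm_num
      have hYe : Y ω = Ym ω := by rw [hYω, if_neg hTne]
      rcases hYmv ω with hYmω | hYmω
      · have hm3 : ω ∈ N ∩ A3 ∩ Bm := ⟨⟨hNω, (hA3mem ω).mpr hYmω⟩, hBmω⟩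
        have hm4 : ω ∉ N ∩ A4 ∩ Bm := fun h => by
          have := (hA4mem ω).mp h.1.2; rw [hYmω] at this; norm_num at this
        simp only [hF1, hF2, hF3, hF4, Set.indicator_of_mem hm3,
          Set.indicator_of_notMem hm4, Set.indicator_of_notMem h1,
          Set.indicator_of_notMem h2, Set.indicator_of_mem hNω, hYe, hTω, hQe, hYmω]
        field_simp <;> ring_nf
      · have hm3 : ω ∉ N ∩ A3 ∩ Bm := fun h => by
          have := (hA3mem ω).mp h.1.2; rw [hYmω] at this; norm_num at this
        have hm4 : ω ∈ N ∩ A4 ∩ Bm := ⟨⟨hNω, (hA4mem ω).mpr hYmω⟩, hBmω⟩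
        simp only [hF1, hF2, hF3, hF4, Set.indicator_of_mem hm4,
          Set.indicator_of_notMem hm3, Set.indicator_of_notMem h1,
          Set.indicator_of_notMem h2, Set.indicator_of_mem hNω, hYe, hTω, hQe, hYmω]
        field_simp <;> ring
  -- compute the integral
  have e12 : Integrable (fun ω => F1 ω - F2 ω) μ := int1.sub int2
  have e123 : Integrable (fun ω => F1 ω - F2 ω - F3 ω) μ := e12.sub int3
  have hint : ∫ ω, N.indicator (fun _ => (2:ℝ)) ω * (Y ω * T ω / Q ω) ∂μ
      = 2 * ((μ (N ∩ A1)).toReal - (μ (N ∩ A2)).toReal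
          - (μ (N ∩ A3)).toReal + (μ (N ∩ A4)).toReal) := by
    rw [integral_congr_ae (Filter.Eventually.of_forall hpt), integral_const_mul,
      integral_add e123 int4, integral_sub e12 int3, integral_sub int1 int2,
      eq1, eq2, eq3, eq4]
  -- final combinatorial identity
  set D : Set Ω := N ∩ {ω | Ym ω < Yp ω} with hDdef
  have hNm : MeasurableSet N := hm _ hN
  have hD : MeasurableSet D := hNm.inter (measurableSet_lt hYm hYp)
  have hptD : ∀ ω, (N ∩ A1).indicator (fun _ => (1:ℝ)) ω
      - (N ∩ A2).indicator (fun _ => (1:ℝ)) ω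
      - (N ∩ A3).indicator (fun _ => (1:ℝ)) ω
      + (N ∩ A4).indicator (fun _ => (1:ℝ)) ω
      = 2 * D.indicator (fun _ => (1:ℝ)) ω := by
    intro ω
    by_cases hNω : ω ∈ N
    · rcases hYpv ω with hYpω | hYpω <;> rcases hYmv ω with hYmω | hYmω
      · have m1 : ω ∈ N ∩ A1 := ⟨hNω, (hA1mem ω).mpr hYpω⟩
        have m2 : ω ∉ N ∩ A2 := fun h => by
          have := (hA2mem ω).mp h.2; rw [hYpω] at this; norm_num at this
        have m3 : ω ∈ N ∩ A3 := ⟨hNω, (hA3mem ω).mpr hYmω⟩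
        have m4 : ω ∉ N ∩ A4 := fun h => by
          have := (hA4mem ω).mp h.2; rw [hYmω] at this; norm_num at this
        have mD : ω ∉ D := fun h => by
          have := h.2; simp only [Set.mem_setOf_eq, hYpω, hYmω] at this; linarith
        simp [Set.indicator_of_mem, Set.indicator_of_notMem, m1, m2, m3, m4, mD]
      · have m1 : ω ∈ N ∩ A1 := ⟨hNω, (hA1mem ω).mpr hYpω⟩
        have m2 : ω ∉ N ∩ A2 := fun h => by
          have := (hA2mem ω).mp h.2; rw [hYpω] at this; norm_num at this
        have m3 : ω ∉ N ∩ A3 := fun h => by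
          have := (hA3mem ω).mp h.2; rw [hYmω] at this; norm_num at this
        have m4 : ω ∈ N ∩ A4 := ⟨hNω, (hA4mem ω).mpr hYmω⟩
        have mD : ω ∈ D := ⟨hNω, by simp only [Set.mem_setOf_eq, hYpω, hYmω]; norm_num⟩
        simp [Set.indicator_of_mem, Set.indicator_of_notMem, m1, m2, m3, m4, mD]
        norm_num
      · have hmono := mono ω
        rw [hYpω, hYmω] at hmono
        linarith
      · have m1 : ω ∉ N ∩ A1 := fun h => by
          have := (hA1mem ω).mp h.2; rw [hYpω] at this; norm_num at this
        have m2 : ω ∈ N ∩ A2 := ⟨hNω, (hA2mem ω).mpr hYpω⟩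
        have m3 : ω ∉ N ∩ A3 := fun h => by
          have := (hA3mem ω).mp h.2; rw [hYmω] at this; norm_num at this
        have m4 : ω ∈ N ∩ A4 := ⟨hNω, (hA4mem ω).mpr hYmω⟩
        have mD : ω ∉ D := fun h => by
          have := h.2; simp only [Set.mem_setOf_eq, hYpω, hYmω] at this; linarith
        simp [Set.indicator_of_mem, Set.indicator_of_notMem, m1, m2, m3, m4, mD]
    · have m1 : ω ∉ N ∩ A1 := fun h => hNω h.1
      have m2 : ω ∉ N ∩ A2 := fun h => hNω h.1
      have m3 : ω ∉ N ∩ A3 := fun h => hNω h.1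
      have m4 : ω ∉ N ∩ A4 := fun h => hNω h.1
      have mD : ω ∉ D := fun h => hNω h.1
      simp [Set.indicator_of_notMem, m1, m2, m3, m4, mD]
  have i1 : ∀ (s : Set Ω), MeasurableSet s →
      ∫ ω, s.indicator (fun _ => (1:ℝ)) ω ∂μ = (μ s).toReal := by
    intro s hs
    rw [integral_indicator_const (1:ℝ) hs]
    simp
    rfl
  have j1 : Integrable ((N ∩ A1).indicator (fun _ => (1:ℝ))) μ :=
    (integrable_const 1).indicator (hNm.inter hA1)
  have j2 : Integrable ((N ∩ A2).indicator (fun _ => (1:ℝ))) μ :=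
    (integrable_const 1).indicator (hNm.inter hA2)
  have j3 : Integrable ((N ∩ A3).indicator (fun _ => (1:ℝ))) μ :=
    (integrable_const 1).indicator (hNm.inter hA3)
  have j4 : Integrable ((N ∩ A4).indicator (fun _ => (1:ℝ))) μ :=
    (integrable_const 1).indicator (hNm.inter hA4)
  have k12 : Integrable (fun ω => (N ∩ A1).indicator (fun _ => (1:ℝ)) ω
      - (N ∩ A2).indicator (fun _ => (1:ℝ)) ω) μ := j1.sub j2
  have k123 : Integrable (fun ω => (N ∩ A1).indicator (fun _ => (1:ℝ)) ω
      - (N ∩ A2).indicator (fun _ => (1:ℝ)) ω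
      - (N ∩ A3).indicator (fun _ => (1:ℝ)) ω) μ := k12.sub j3
  have hcomb : (μ (N ∩ A1)).toReal - (μ (N ∩ A2)).toReal
      - (μ (N ∩ A3)).toReal + (μ (N ∩ A4)).toReal = 2 * (μ D).toReal := by
    rw [← i1 _ (hNm.inter hA1), ← i1 _ (hNm.inter hA2), ← i1 _ (hNm.inter hA3),
      ← i1 _ (hNm.inter hA4), ← i1 _ hD,
      ← integral_sub j1 j2, ← integral_sub k12 j3, ← integral_add k123 j4,
      ← integral_const_mul]
    exact integral_congr_ae (Filter.Eventually.of_forall hptD)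
  rw [hint, hcomb]
  ring

/-- Under monotonicity and unconfoundedness, the false-negative probability satisfies
`P(f(X) = -1, R = +1) = (1/4)·E[(1 - f(X))·Y·T/Q]` for any measurable classifier `f`. -/
theorem stmt_3 {Ω : Type*} [MeasurableSpace Ω] [StandardBorelSpace Ω]
    (μ : Measure Ω) [IsProbabilityMeasure μ]
    {p : ℕ} (X : Ω → (Fin p → ℝ)) (hX : Measurable X)
    (Yp Ym T : Ω → ℝ) (hYp : Measurable Yp) (hYm : Measurable Ym) (hT : Measurable T)
    (hYpv : ∀ ω, Yp ω = 1 ∨ Yp ω = -1) (hYmv : ∀ ω, Ym ω = 1 ∨ Ym ω = -1)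
    (hTv : ∀ ω, T ω = 1 ∨ T ω = -1)
    (mono : ∀ ω, Ym ω ≤ Yp ω)
    (hmX : MeasurableSpace.comap X inferInstance ≤ ‹MeasurableSpace Ω›)
    (unconf : CondIndepFun (MeasurableSpace.comap X inferInstance) hmX
      (fun ω => (Yp ω, Ym ω)) T μ)
    (eX : Ω → ℝ) (heXmeas : Measurable[MeasurableSpace.comap X inferInstance] eX)
    (heX : eX =ᵐ[μ] μ[{ω | T ω = 1}.indicator (fun _ => (1 : ℝ)) |
      MeasurableSpace.comap X inferInstance])
    (heXb : ∀ ω, 0 < eX ω ∧ eX ω < 1)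
    (Q : Ω → ℝ) (hQ : ∀ ω, Q ω = 1 / 2 + (eX ω - 1 / 2) * T ω)
    (Y : Ω → ℝ) (hY : ∀ ω, Y ω = if T ω = 1 then Yp ω else Ym ω)
    (f : (Fin p → ℝ) → ℝ) (hf : Measurable f) (hfv : ∀ x, f x = 1 ∨ f x = -1) :
    (μ {ω | f (X ω) = -1 ∧ Ym ω < Yp ω}).toReal
      = (1 / 4) * ∫ ω, (1 - f (X ω)) * (Y ω * T ω / Q ω) ∂μ := by
  classical
  have hN : MeasurableSet[MeasurableSpace.comap X inferInstance] {ω | f (X ω) = -1} := by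
    refine ⟨f ⁻¹' {-1}, hf (measurableSet_singleton _), ?_⟩
    rfl
  have key := auxmain (MeasurableSpace.comap X inferInstance) μ Yp Ym T hYp hYm hT
    hYpv hYmv hTv mono hmX unconf eX heXmeas heX heXb Q hQ Y hY
    {ω | f (X ω) = -1} hN
  have hset : {ω | f (X ω) = -1 ∧ Ym ω < Yp ω}
      = {ω | f (X ω) = -1} ∩ {ω | Ym ω < Yp ω} := by
    ext ω; simp [Set.mem_inter_iff, Set.mem_setOf_eq]
  have hfun : ∀ ω, ({ω | f (X ω) = -1} : Set Ω).indicator (fun _ => (2:ℝ)) ω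
      = 1 - f (X ω) := by
    intro ω
    rcases hfv (X ω) with h | h
    · have hmem : ω ∉ {ω | f (X ω) = -1} := fun hh => by
        have h2 : f (X ω) = -1 := hh
        rw [h] at h2; norm_num at h2
      rw [Set.indicator_of_notMem hmem, h]
      norm_num
    · have hmem : ω ∈ {ω | f (X ω) = -1} := h
      rw [Set.indicator_of_mem hmem, h]
      norm_num
  rw [hset, key]
  congr 1
  refine integral_congr_ae (Filter.Eventually.of_forall fun ω => ?_)
  simp only [hfun]
end

section
/- Under monotonicity and unconfoundedness, for any θ ∈ [0,1] and any classifier f : ℝ^p → {-1,+1}, the weighted misclassification loss decomposes as L_θ(f) = (1/4)·E[f(X)·(2θ - Y·T/Q)] + (1/4)·E[2θ + (1-2θ)·Y·T/Q], where L_θ(f) = θ·P(f(X)=+1, R=-1) + (1-θ)·P(f(X)=-1, R=+1). -/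
open MeasureTheory ProbabilityTheory

open ENNReal in
lemma aux_L3 {Ω : Type*} {m m0 : MeasurableSpace Ω} (hm : m ≤ m0) (μ : Measure Ω)
    [IsFiniteMeasure μ] {D : Set Ω} (hD : MeasurableSet D)
    {h : Ω → ℝ} (hh : Measurable[m] h)
    (hhe : h =ᵐ[μ] μ[D.indicator (fun _ => (1:ℝ)) | m])
    {g : Ω → ℝ≥0∞} (hg : Measurable[m] g) :
    ∫⁻ ω, g ω * D.indicator (fun _ => (1:ℝ≥0∞)) ω ∂μ
      = ∫⁻ ω, g ω * ENNReal.ofReal (h ω) ∂μ := by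
  have hind : Integrable (D.indicator fun _ => (1:ℝ)) μ := (integrable_const 1).indicator hD
  have hhint : Integrable h μ := integrable_condExp.congr hhe.symm
  have h0 : 0 ≤ᵐ[μ] h := by
    filter_upwards [hhe, condExp_nonneg (μ := μ) (m := m)
      (f := D.indicator fun _ => (1:ℝ)) (ae_of_all _ (Set.indicator_nonneg (fun _ _ => zero_le_one)))]
      with ω h1 h2
    rw [h1]; exact h2
  have key : ∀ s, MeasurableSet[m] s →
      (μ.restrict D) s = (μ.withDensity fun ω => ENNReal.ofReal (h ω)) s := by
    intro s hs
    rw [Measure.restrict_apply (hm s hs), withDensity_apply _ (hm s hs)]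
    have e1 : (μ (s ∩ D)).toReal = ∫ ω in s, D.indicator (fun _ => (1:ℝ)) ω ∂μ := by
      rw [integral_indicator hD, setIntegral_const, smul_eq_mul, mul_one,
        Measure.real, Measure.restrict_apply hD, Set.inter_comm]
    have e2 : ∫ ω in s, D.indicator (fun _ => (1:ℝ)) ω ∂μ = ∫ ω in s, h ω ∂μ := by
      rw [← setIntegral_condExp hm hind hs]
      exact (setIntegral_congr_ae (hm s hs) (hhe.mono fun ω hω _ => hω)).symm
    have e3 : ENNReal.ofReal (∫ ω in s, h ω ∂μ) = ∫⁻ ω in s, ENNReal.ofReal (h ω) ∂μ :=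
      ofReal_integral_eq_lintegral_ofReal hhint.restrict (ae_restrict_of_ae h0)
    rw [← e3, ← e2, ← e1, ENNReal.ofReal_toReal (measure_ne_top μ (s ∩ D))]
  have e1 : ∫⁻ ω, g ω * D.indicator (fun _ => (1:ℝ≥0∞)) ω ∂μ = ∫⁻ ω, g ω ∂(μ.restrict D) := by
    rw [← lintegral_indicator hD]
    congr 1; funext ω
    by_cases hω : ω ∈ D <;> simp [hω]
  have e2 : ∫⁻ ω, g ω * ENNReal.ofReal (h ω) ∂μ
      = ∫⁻ ω, g ω ∂(μ.withDensity fun ω => ENNReal.ofReal (h ω)) := by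
    rw [lintegral_withDensity_eq_lintegral_mul μ
      (f := fun ω => ENNReal.ofReal (h ω))
      (ENNReal.measurable_ofReal.comp (hh.mono hm le_rfl)) (hg.mono hm le_rfl)]
    congr 1; funext ω; exact mul_comm _ _
  rw [e1, e2, ← lintegral_trim hm hg, ← lintegral_trim hm hg]
  congr 1
  refine @Measure.ext Ω m _ _ (fun s hs => ?_)
  rw [trim_measurableSet_eq hm hs, trim_measurableSet_eq hm hs]
  exact key s hs

open ENNReal in
lemma aux_key {Ω : Type*} {m m0 : MeasurableSpace Ω} (hm : m ≤ m0) (μ : Measure Ω)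
    [IsFiniteMeasure μ] {A D : Set Ω} (hA : MeasurableSet A) (hD : MeasurableSet D)
    {e : Ω → ℝ} (he : Measurable[m] e) (hepos : ∀ ω, 0 < e ω)
    (hcond : (fun ω => e ω * (μ[A.indicator (fun _ => (1:ℝ)) | m]) ω) =ᵐ[μ]
       μ[(A ∩ D).indicator (fun _ => (1:ℝ)) | m])
    {g : Ω → ℝ≥0∞} (hg : Measurable[m] g) :
    ∫⁻ ω, (g ω / ENNReal.ofReal (e ω)) * (A ∩ D).indicator (fun _ => (1:ℝ≥0∞)) ω ∂μ
      = ∫⁻ ω, g ω * A.indicator (fun _ => (1:ℝ≥0∞)) ω ∂μ := by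
  have hk : Measurable[m] (μ[A.indicator (fun _ => (1:ℝ)) | m]) :=
    stronglyMeasurable_condExp.measurable
  have hg' : Measurable[m] (fun ω => g ω / ENNReal.ofReal (e ω)) :=
    hg.div (ENNReal.measurable_ofReal.comp he)
  rw [aux_L3 hm μ (hA.inter hD) (he.mul hk) hcond hg']
  have : ∀ ω, (g ω / ENNReal.ofReal (e ω))
      * ENNReal.ofReal (e ω * (μ[A.indicator (fun _ => (1:ℝ)) | m]) ω)
      = g ω * ENNReal.ofReal ((μ[A.indicator (fun _ => (1:ℝ)) | m]) ω) := by
    intro ω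
    rw [ENNReal.ofReal_mul (hepos ω).le, ← mul_assoc,
      ENNReal.div_mul_cancel (by simpa using (hepos ω)) ENNReal.ofReal_ne_top]
  simp only [Pi.mul_apply, this]
  exact (aux_L3 hm μ hA hk Filter.EventuallyEq.rfl hg).symm

open ENNReal in
lemma aux_basic {Ω : Type*} {m m0 : MeasurableSpace Ω} (hm : m ≤ m0) (μ : Measure Ω)
    [IsFiniteMeasure μ] {A D C : Set Ω} (hA : MeasurableSet A) (hD : MeasurableSet D)
    (hC : MeasurableSet[m] C)
    {e : Ω → ℝ} (he : Measurable[m] e) (hepos : ∀ ω, 0 < e ω)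
    (hcond : (fun ω => e ω * (μ[A.indicator (fun _ => (1:ℝ)) | m]) ω) =ᵐ[μ]
       μ[(A ∩ D).indicator (fun _ => (1:ℝ)) | m]) :
    Integrable (fun ω => (C.indicator (fun _ => (1:ℝ)) ω / e ω)
        * (A ∩ D).indicator (fun _ => (1:ℝ)) ω) μ
    ∧ ∫ ω, (C.indicator (fun _ => (1:ℝ)) ω / e ω)
        * (A ∩ D).indicator (fun _ => (1:ℝ)) ω ∂μ = (μ (C ∩ A)).toReal := by
  set F : Ω → ℝ := fun ω => (C.indicator (fun _ => (1:ℝ)) ω / e ω)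
      * (A ∩ D).indicator (fun _ => (1:ℝ)) ω with hF
  have hF0 : ∀ ω, 0 ≤ F ω := fun ω => mul_nonneg
    (div_nonneg (Set.indicator_nonneg (fun _ _ => zero_le_one) ω) (hepos ω).le)
    (Set.indicator_nonneg (fun _ _ => zero_le_one) ω)
  have hFmeas : Measurable F := by
    apply Measurable.mul
    · exact ((measurable_const.indicator (hm _ hC)).div (he.mono hm le_rfl))
    · exact measurable_const.indicator (hA.inter hD)
  have hlint : ∫⁻ ω, ENNReal.ofReal (F ω) ∂μ = μ (C ∩ A) := by
    have hptw : ∀ ω, ENNReal.ofReal (F ω)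
        = ((C.indicator (fun _ => (1:ℝ≥0∞)) ω) / ENNReal.ofReal (e ω))
          * (A ∩ D).indicator (fun _ => (1:ℝ≥0∞)) ω := by
      intro ω
      rw [hF, ENNReal.ofReal_mul (div_nonneg (Set.indicator_nonneg (fun _ _ => zero_le_one) ω) (hepos ω).le),
        ENNReal.ofReal_div_of_pos (hepos ω)]
      by_cases h1 : ω ∈ C <;> by_cases h2 : ω ∈ A ∩ D <;> simp [h1, h2]
    simp only [hptw]
    rw [aux_key hm μ hA hD he hepos hcond (measurable_const.indicator hC)]
    have : ∀ ω, C.indicator (fun _ => (1:ℝ≥0∞)) ω * A.indicator (fun _ => (1:ℝ≥0∞)) ω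
        = (C ∩ A).indicator (fun _ => (1:ℝ≥0∞)) ω := by
      intro ω; by_cases h1 : ω ∈ C <;> by_cases h2 : ω ∈ A <;>
        simp [h1, h2, Set.indicator, Set.mem_inter_iff]
    simp only [this]
    rw [lintegral_indicator ((hm _ hC).inter hA), lintegral_one,
      Measure.restrict_apply_univ]
  have hint : Integrable F μ := by
    refine ⟨hFmeas.aestronglyMeasurable, ?_⟩
    rw [hasFiniteIntegral_iff_norm]
    have : ∀ ω, ENNReal.ofReal ‖F ω‖ = ENNReal.ofReal (F ω) := by
      intro ω; rw [Real.norm_of_nonneg (hF0 ω)]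
    simp only [this, hlint]
    exact measure_lt_top μ _
  refine ⟨hint, ?_⟩
  rw [integral_eq_lintegral_of_nonneg_ae (ae_of_all _ hF0) hFmeas.aestronglyMeasurable, hlint]

open ENNReal in
lemma aux_W {Ω : Type*} {m m0 : MeasurableSpace Ω} (hm : m ≤ m0) (μ : Measure Ω)
    [IsFiniteMeasure μ] {A D : Set Ω} (hA : MeasurableSet A) (hD : MeasurableSet D)
    {e : Ω → ℝ} (he : Measurable[m] e) (hepos : ∀ ω, 0 < e ω)
    (hcond : (fun ω => e ω * (μ[A.indicator (fun _ => (1:ℝ)) | m]) ω) =ᵐ[μ]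
       μ[(A ∩ D).indicator (fun _ => (1:ℝ)) | m])
    {w : Ω → ℝ} (hw : Measurable[m] w) (hwv : ∀ ω, w ω = 1 ∨ w ω = -1) :
    Integrable (fun ω => (w ω / e ω) * (A ∩ D).indicator (fun _ => (1:ℝ)) ω) μ
    ∧ Integrable (fun ω => w ω * A.indicator (fun _ => (1:ℝ)) ω) μ
    ∧ ∫ ω, (w ω / e ω) * (A ∩ D).indicator (fun _ => (1:ℝ)) ω ∂μ
        = ∫ ω, w ω * A.indicator (fun _ => (1:ℝ)) ω ∂μ := by
  set C : Set Ω := {ω | w ω = 1} with hCdef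
  have hC : MeasurableSet[m] C := hw (measurableSet_singleton 1)
  have hwC : ∀ ω, w ω = C.indicator (fun _ => (1:ℝ)) ω - Cᶜ.indicator (fun _ => (1:ℝ)) ω := by
    intro ω
    by_cases hω : ω ∈ C
    · simp [hω, Set.indicator_of_mem, hω]
      exact hω
    · have : w ω = -1 := (hwv ω).resolve_left hω
      simp [hω, this]
  obtain ⟨i1, v1⟩ := aux_basic hm μ hA hD hC he hepos hcond
  obtain ⟨i2, v2⟩ := aux_basic hm μ hA hD hC.compl he hepos hcond
  have hdec : (fun ω => (w ω / e ω) * (A ∩ D).indicator (fun _ => (1:ℝ)) ω)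
      = fun ω => (C.indicator (fun _ => (1:ℝ)) ω / e ω) * (A ∩ D).indicator (fun _ => (1:ℝ)) ω
        - (Cᶜ.indicator (fun _ => (1:ℝ)) ω / e ω) * (A ∩ D).indicator (fun _ => (1:ℝ)) ω := by
    funext ω; rw [hwC ω]; ring
  have hdec2 : (fun ω => w ω * A.indicator (fun _ => (1:ℝ)) ω)
      = fun ω => (C ∩ A).indicator (fun _ => (1:ℝ)) ω - (Cᶜ ∩ A).indicator (fun _ => (1:ℝ)) ω := by
    funext ω
    rw [hwC ω]
    by_cases h1 : ω ∈ C <;> by_cases h2 : ω ∈ A <;>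
      simp [h1, h2, Set.indicator, Set.mem_inter_iff]
  have iA1 : Integrable ((C ∩ A).indicator (fun _ => (1:ℝ))) μ :=
    (integrable_const 1).indicator ((hm _ hC).inter hA)
  have iA2 : Integrable ((Cᶜ ∩ A).indicator (fun _ => (1:ℝ))) μ :=
    (integrable_const 1).indicator ((hm _ hC.compl).inter hA)
  refine ⟨hdec ▸ i1.sub i2, hdec2 ▸ iA1.sub iA2, ?_⟩
  rw [hdec, hdec2, integral_sub i1 i2, integral_sub iA1 iA2, v1, v2,
    integral_indicator_const _ ((hm _ hC).inter hA),
    integral_indicator_const _ ((hm _ hC.compl).inter hA)]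
  simp
  rfl

open ENNReal in
lemma aux_main {Ω : Type*} {m m0 : MeasurableSpace Ω} (hm : m ≤ m0) (μ : Measure Ω)
    [IsProbabilityMeasure μ]
    (Yp Ym T : Ω → ℝ) (hYp : Measurable[m0] Yp) (hYm : Measurable[m0] Ym)
    (hT : Measurable[m0] T)
    (hYpv : ∀ ω, Yp ω = 1 ∨ Yp ω = -1) (hYmv : ∀ ω, Ym ω = 1 ∨ Ym ω = -1)
    (hTv : ∀ ω, T ω = 1 ∨ T ω = -1)
    (eX : Ω → ℝ) (heXmeas : Measurable[m] eX) (heXb : ∀ ω, 0 < eX ω ∧ eX ω < 1)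
    (hcondB : ∀ a b : ℝ,
      (fun ω => eX ω
          * (μ[((fun ω => (Yp ω, Ym ω)) ⁻¹' {(a,b)}).indicator (fun _ => (1:ℝ)) | m]) ω)
        =ᵐ[μ] μ[(((fun ω => (Yp ω, Ym ω)) ⁻¹' {(a,b)}) ∩ {ω | T ω = 1}).indicator
          (fun _ => (1:ℝ)) | m])
    (Q Y : Ω → ℝ) (hQ : ∀ ω, Q ω = 1 / 2 + (eX ω - 1 / 2) * T ω)
    (hY : ∀ ω, Y ω = if T ω = 1 then Yp ω else Ym ω)
    (w : Ω → ℝ) (hw : Measurable[m] w) (hwv : ∀ ω, w ω = 1 ∨ w ω = -1) :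
    Integrable (fun ω => w ω * (Y ω * T ω / Q ω)) μ ∧
    Integrable (fun ω => w ω * (Yp ω - Ym ω)) μ ∧
    ∫ ω, w ω * (Y ω * T ω / Q ω) ∂μ = ∫ ω, w ω * (Yp ω - Ym ω) ∂μ := by
  have hVmeas : Measurable[m0] (fun ω => (Yp ω, Ym ω)) := hYp.prodMk hYm
  set B : Set Ω := {ω | T ω = 1} with hBdef
  have hB : MeasurableSet[m0] B := hT (measurableSet_singleton 1)
  set A : ℝ → ℝ → Set Ω := fun a b => (fun ω => (Yp ω, Ym ω)) ⁻¹' {(a, b)} with hAdef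
  have hA : ∀ a b, MeasurableSet[m0] (A a b) := fun a b => hVmeas (measurableSet_singleton _)
  have hmemA : ∀ a b ω, ω ∈ A a b ↔ (Yp ω = a ∧ Ym ω = b) := by
    intro a b ω; simp [hAdef, Prod.ext_iff]
  -- conditional expectation for the complement side
  have hcondBc : ∀ a b : ℝ,
      (fun ω => (1 - eX ω) * (μ[(A a b).indicator (fun _ => (1:ℝ)) | m]) ω)
        =ᵐ[μ] μ[((A a b) ∩ Bᶜ).indicator (fun _ => (1:ℝ)) | m] := by
    intro a b
    have hsplit : ((A a b) ∩ Bᶜ).indicator (fun _ => (1:ℝ))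
        = (A a b).indicator (fun _ => (1:ℝ))
            - ((A a b) ∩ B).indicator (fun _ => (1:ℝ)) := by
      funext ω
      by_cases h1 : ω ∈ A a b <;> by_cases h2 : ω ∈ B <;>
        simp [h1, h2, Set.indicator_apply, Set.mem_inter_iff]
    have hintA : Integrable ((A a b).indicator (fun _ => (1:ℝ))) μ :=
      (integrable_const 1).indicator (hA a b)
    have hintAB : Integrable (((A a b) ∩ B).indicator (fun _ => (1:ℝ))) μ :=
      (integrable_const 1).indicator ((hA a b).inter hB)
    have hsub := condExp_sub (m := m) (μ := μ) hintA hintAB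
    rw [hsplit]
    filter_upwards [hsub, hcondB a b] with ω e1 e2
    rw [e1]
    simp only [Pi.sub_apply]
    rw [← e2]
    ring
  have hepos : ∀ ω, 0 < eX ω := fun ω => (heXb ω).1
  have he'pos : ∀ ω, 0 < 1 - eX ω := fun ω => by linarith [(heXb ω).2]
  have he'meas : Measurable[m] (fun ω => 1 - eX ω) := measurable_const.sub heXmeas
  set FB : ℝ → ℝ → Ω → ℝ := fun a b ω =>
    (w ω / eX ω) * ((A a b ∩ B).indicator (fun _ => (1:ℝ)) ω) with hFBdef
  set FC : ℝ → ℝ → Ω → ℝ := fun a b ω =>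
    (w ω / (1 - eX ω)) * ((A a b ∩ Bᶜ).indicator (fun _ => (1:ℝ)) ω) with hFCdef
  set GA : ℝ → ℝ → Ω → ℝ := fun a b ω =>
    w ω * ((A a b).indicator (fun _ => (1:ℝ)) ω) with hGAdef
  have WB : ∀ a b : ℝ, Integrable (FB a b) μ ∧ Integrable (GA a b) μ ∧
      ∫ ω, FB a b ω ∂μ = ∫ ω, GA a b ω ∂μ :=
    fun a b => aux_W hm μ (hA a b) hB heXmeas hepos (hcondB a b) hw hwv
  have WC : ∀ a b : ℝ, Integrable (FC a b) μ ∧ Integrable (GA a b) μ ∧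
      ∫ ω, FC a b ω ∂μ = ∫ ω, GA a b ω ∂μ :=
    fun a b => aux_W hm μ (hA a b) hB.compl he'meas he'pos (hcondBc a b) hw hwv
  have iFB : ∀ a b : ℝ, Integrable (FB a b) μ := fun a b => (WB a b).1
  have iFC : ∀ a b : ℝ, Integrable (FC a b) μ := fun a b => (WC a b).1
  have iGA : ∀ a b : ℝ, Integrable (GA a b) μ := fun a b => (WB a b).2.1
  have hptw : ∀ ω, w ω * (Y ω * T ω / Q ω) =
      FB 1 1 ω + FB 1 (-1) ω - FB (-1) 1 ω - FB (-1) (-1) ω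
        - FC 1 1 ω + FC 1 (-1) ω - FC (-1) 1 ω + FC (-1) (-1) ω := by
    intro ω
    have he0 : eX ω ≠ 0 := (hepos ω).ne'
    have he1 : (1:ℝ) - eX ω ≠ 0 := (he'pos ω).ne'
    have he2 : (2:ℝ) - eX ω * 2 ≠ 0 := by linarith [he'pos ω]
    classical
    rcases hTv ω with ht | ht <;> rcases hYpv ω with hp | hp <;> rcases hYmv ω with hq | hq <;>
      · simp only [hFBdef, hFCdef, hY, hQ, Set.indicator_apply, Set.mem_inter_iff, hmemA,
          hBdef, Set.mem_setOf_eq, Set.mem_compl_iff, hp, hq, ht]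
        try norm_num
        try ring
        try (field_simp; ring)
  have hptw2 : ∀ ω, w ω * (Yp ω - Ym ω) = 2 * GA 1 (-1) ω - 2 * GA (-1) 1 ω := by
    intro ω
    classical
    rcases hYpv ω with hp | hp <;> rcases hYmv ω with hq | hq <;>
      · simp only [hGAdef, Set.indicator_apply, hmemA, hp, hq]
        try norm_num
        try ring
  have i1 : Integrable (fun ω => FB 1 1 ω + FB 1 (-1) ω) μ := (iFB 1 1).add (iFB 1 (-1))
  have i2 : Integrable (fun ω => FB 1 1 ω + FB 1 (-1) ω - FB (-1) 1 ω) μ := i1.sub (iFB (-1) 1)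
  have i3 : Integrable (fun ω => FB 1 1 ω + FB 1 (-1) ω - FB (-1) 1 ω - FB (-1) (-1) ω) μ :=
    i2.sub (iFB (-1) (-1))
  have i4 : Integrable (fun ω => FB 1 1 ω + FB 1 (-1) ω - FB (-1) 1 ω - FB (-1) (-1) ω
      - FC 1 1 ω) μ := i3.sub (iFC 1 1)
  have i5 : Integrable (fun ω => FB 1 1 ω + FB 1 (-1) ω - FB (-1) 1 ω - FB (-1) (-1) ω
      - FC 1 1 ω + FC 1 (-1) ω) μ := i4.add (iFC 1 (-1))
  have i6 : Integrable (fun ω => FB 1 1 ω + FB 1 (-1) ω - FB (-1) 1 ω - FB (-1) (-1) ω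
      - FC 1 1 ω + FC 1 (-1) ω - FC (-1) 1 ω) μ := i5.sub (iFC (-1) 1)
  have i7 : Integrable (fun ω => FB 1 1 ω + FB 1 (-1) ω - FB (-1) 1 ω - FB (-1) (-1) ω
      - FC 1 1 ω + FC 1 (-1) ω - FC (-1) 1 ω + FC (-1) (-1) ω) μ := i6.add (iFC (-1) (-1))
  have hfun1 : (fun ω => w ω * (Y ω * T ω / Q ω))
      = fun ω => FB 1 1 ω + FB 1 (-1) ω - FB (-1) 1 ω - FB (-1) (-1) ω
        - FC 1 1 ω + FC 1 (-1) ω - FC (-1) 1 ω + FC (-1) (-1) ω := funext hptw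
  have hfun2 : (fun ω => w ω * (Yp ω - Ym ω))
      = fun ω => 2 * GA 1 (-1) ω - 2 * GA (-1) 1 ω := funext hptw2
  have int2 : Integrable (fun ω => w ω * (Yp ω - Ym ω)) μ := by
    rw [hfun2]; exact ((iGA 1 (-1)).const_mul 2).sub ((iGA (-1) 1).const_mul 2)
  refine ⟨by rw [hfun1]; exact i7, int2, ?_⟩
  rw [hfun1, hfun2,
    integral_add i6 (iFC (-1) (-1)), integral_sub i5 (iFC (-1) 1),
    integral_add i4 (iFC 1 (-1)), integral_sub i3 (iFC 1 1),
    integral_sub i2 (iFB (-1) (-1)), integral_sub i1 (iFB (-1) 1),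
    integral_add (iFB 1 1) (iFB 1 (-1)),
    integral_sub ((iGA 1 (-1)).const_mul 2) ((iGA (-1) 1).const_mul 2),
    integral_const_mul, integral_const_mul,
    (WB 1 1).2.2, (WB 1 (-1)).2.2, (WB (-1) 1).2.2, (WB (-1) (-1)).2.2,
    (WC 1 1).2.2, (WC 1 (-1)).2.2, (WC (-1) 1).2.2, (WC (-1) (-1)).2.2]
  ring

/-- Under monotonicity and unconfoundedness, for any `θ ∈ [0,1]` and classifier `f`, the weighted
misclassification loss decomposes as
`L_θ(f) = (1/4)·E[f(X)·(2θ - Y·T/Q)] + (1/4)·E[2θ + (1-2θ)·Y·T/Q]`, where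
`L_θ(f) = θ·P(f(X)=+1, R=-1) + (1-θ)·P(f(X)=-1, R=+1)`. -/
theorem stmt_5 {Ω : Type*} [MeasurableSpace Ω] [StandardBorelSpace Ω]
    (μ : Measure Ω) [IsProbabilityMeasure μ]
    {p : ℕ} (X : Ω → (Fin p → ℝ)) (hX : Measurable X)
    (Yp Ym T : Ω → ℝ) (hYp : Measurable Yp) (hYm : Measurable Ym) (hT : Measurable T)
    (hYpv : ∀ ω, Yp ω = 1 ∨ Yp ω = -1) (hYmv : ∀ ω, Ym ω = 1 ∨ Ym ω = -1)
    (hTv : ∀ ω, T ω = 1 ∨ T ω = -1)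
    (mono : ∀ ω, Ym ω ≤ Yp ω)
    (hmX : MeasurableSpace.comap X inferInstance ≤ ‹MeasurableSpace Ω›)
    (unconf : CondIndepFun (MeasurableSpace.comap X inferInstance) hmX
      (fun ω => (Yp ω, Ym ω)) T μ)
    (eX : Ω → ℝ) (heXmeas : Measurable[MeasurableSpace.comap X inferInstance] eX)
    (heX : eX =ᵐ[μ] μ[{ω | T ω = 1}.indicator (fun _ => (1 : ℝ)) |
      MeasurableSpace.comap X inferInstance])
    (heXb : ∀ ω, 0 < eX ω ∧ eX ω < 1)
    (Q : Ω → ℝ) (hQ : ∀ ω, Q ω = 1 / 2 + (eX ω - 1 / 2) * T ω)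
    (Y : Ω → ℝ) (hY : ∀ ω, Y ω = if T ω = 1 then Yp ω else Ym ω)
    (f : (Fin p → ℝ) → ℝ) (hf : Measurable f) (hfv : ∀ x, f x = 1 ∨ f x = -1)
    (θ : ℝ) (hθ : 0 ≤ θ ∧ θ ≤ 1) :
    θ * (μ {ω | f (X ω) = 1 ∧ ¬ Ym ω < Yp ω}).toReal
        + (1 - θ) * (μ {ω | f (X ω) = -1 ∧ Ym ω < Yp ω}).toReal
      = (1 / 4) * (∫ ω, f (X ω) * (2 * θ - Y ω * T ω / Q ω) ∂μ)
        + (1 / 4) * (∫ ω, 2 * θ + (1 - 2 * θ) * (Y ω * T ω / Q ω) ∂μ) := by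
  have hVmeas : Measurable fun ω => (Yp ω, Ym ω) := hYp.prodMk hYm
  have hCI := (condIndepFun_iff_condExp_inter_preimage_eq_mul (hm' := hmX) hVmeas hT).mp unconf
  have hcondB : ∀ a b : ℝ,
      (fun ω => eX ω * (μ[((fun ω => (Yp ω, Ym ω)) ⁻¹' {(a,b)}).indicator (fun _ => (1:ℝ)) |
          MeasurableSpace.comap X inferInstance]) ω)
        =ᵐ[μ] μ[(((fun ω => (Yp ω, Ym ω)) ⁻¹' {(a,b)}) ∩ {ω | T ω = 1}).indicator
          (fun _ => (1:ℝ)) | MeasurableSpace.comap X inferInstance] := by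
    intro a b
    have h1 := hCI {(a, b)} {1} (measurableSet_singleton _) (measurableSet_singleton _)
    have hpre : T ⁻¹' ({1} : Set ℝ) = {ω | T ω = 1} := rfl
    rw [hpre] at h1
    filter_upwards [h1, heX] with ω e1 e2
    rw [e2, mul_comm]
    exact e1.symm
  have hwm : Measurable[MeasurableSpace.comap X inferInstance] fun ω => f (X ω) :=
    hf.comp (Measurable.of_comap_le le_rfl)
  obtain ⟨intfG, intfD, vf⟩ := aux_main hmX μ Yp Ym T hYp hYm hT hYpv hYmv hTv eX heXmeas
    heXb hcondB Q Y hQ hY _ hwm (fun ω => hfv (X ω))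
  obtain ⟨int1G, int1D, v1⟩ := aux_main hmX μ Yp Ym T hYp hYm hT hYpv hYmv hTv eX heXmeas
    heXb hcondB Q Y hQ hY (fun _ => 1) measurable_const (fun ω => Or.inl rfl)
  simp only [one_mul] at int1G int1D v1
  have intw : Integrable (fun ω => f (X ω)) μ := by
    refine (integrable_const (1:ℝ)).mono' ((hf.comp hX).aestronglyMeasurable) ?_
    exact ae_of_all _ fun ω => by rcases hfv (X ω) with h | h <;> simp [h]
  -- first integral
  have e1 : ∫ ω, f (X ω) * (2 * θ - Y ω * T ω / Q ω) ∂μ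
      = ∫ ω, f (X ω) * (2 * θ - (Yp ω - Ym ω)) ∂μ := by
    have d1 : (fun ω => f (X ω) * (2 * θ - Y ω * T ω / Q ω))
        = fun ω => (2 * θ) * f (X ω) - f (X ω) * (Y ω * T ω / Q ω) := by funext ω; ring
    have d2 : (fun ω => f (X ω) * (2 * θ - (Yp ω - Ym ω)))
        = fun ω => (2 * θ) * f (X ω) - f (X ω) * (Yp ω - Ym ω) := by funext ω; ring
    rw [d1, d2, integral_sub (intw.const_mul _) intfG,
      integral_sub (intw.const_mul _) intfD, vf]
  have e2 : ∫ ω, 2 * θ + (1 - 2 * θ) * (Y ω * T ω / Q ω) ∂μ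
      = ∫ ω, 2 * θ + (1 - 2 * θ) * (Yp ω - Ym ω) ∂μ := by
    rw [integral_add (integrable_const _) (int1G.const_mul _),
      integral_add (integrable_const _) (int1D.const_mul _)]
    congr 1
    rw [integral_const_mul, integral_const_mul, v1]
  rw [e1, e2]
  -- combine the two integrals
  have intF1 : Integrable (fun ω => f (X ω) * (2 * θ - (Yp ω - Ym ω))) μ := by
    have d2 : (fun ω => f (X ω) * (2 * θ - (Yp ω - Ym ω)))
        = fun ω => (2 * θ) * f (X ω) - f (X ω) * (Yp ω - Ym ω) := by funext ω; ring
    rw [d2]; exact (intw.const_mul _).sub intfD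
  have intF2 : Integrable (fun ω => 2 * θ + (1 - 2 * θ) * (Yp ω - Ym ω)) μ :=
    (integrable_const _).add (int1D.const_mul _)
  rw [show (1/4 : ℝ) * (∫ ω, f (X ω) * (2 * θ - (Yp ω - Ym ω)) ∂μ)
        + (1/4 : ℝ) * (∫ ω, 2 * θ + (1 - 2 * θ) * (Yp ω - Ym ω) ∂μ)
      = ∫ ω, (1/4 : ℝ) * (f (X ω) * (2 * θ - (Yp ω - Ym ω)))
          + (1/4 : ℝ) * (2 * θ + (1 - 2 * θ) * (Yp ω - Ym ω)) ∂μ by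
    rw [integral_add (intF1.const_mul _) (intF2.const_mul _), integral_const_mul,
      integral_const_mul]]
  -- pointwise identity with the indicator form
  have hS1 : MeasurableSet {ω | f (X ω) = 1 ∧ ¬ Ym ω < Yp ω} :=
    ((hf.comp hX) (measurableSet_singleton 1)).inter ((measurableSet_lt hYm hYp).compl)
  have hS2 : MeasurableSet {ω | f (X ω) = -1 ∧ Ym ω < Yp ω} :=
    ((hf.comp hX) (measurableSet_singleton (-1))).inter (measurableSet_lt hYm hYp)
  have hpsi : (fun ω => (1/4 : ℝ) * (f (X ω) * (2 * θ - (Yp ω - Ym ω)))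
          + (1/4 : ℝ) * (2 * θ + (1 - 2 * θ) * (Yp ω - Ym ω)))
      = fun ω => θ * ({ω | f (X ω) = 1 ∧ ¬ Ym ω < Yp ω}.indicator (fun _ => (1:ℝ)) ω)
          + (1 - θ) * ({ω | f (X ω) = -1 ∧ Ym ω < Yp ω}.indicator (fun _ => (1:ℝ)) ω) := by
    classical
    funext ω
    rcases hYpv ω with hp | hp <;> rcases hYmv ω with hq | hq <;>
      rcases hfv (X ω) with hfω | hfω <;>
      · first
        | (have := mono ω; rw [hp, hq] at this; exfalso; linarith)
        | (simp only [Set.indicator_apply, Set.mem_setOf_eq, hp, hq, hfω]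
           try norm_num
           try ring)
  rw [hpsi]
  have hint1 : Integrable ({ω | f (X ω) = 1 ∧ ¬ Ym ω < Yp ω}.indicator (fun _ => (1:ℝ))) μ :=
    (integrable_const 1).indicator hS1
  have hint2 : Integrable ({ω | f (X ω) = -1 ∧ Ym ω < Yp ω}.indicator (fun _ => (1:ℝ))) μ :=
    (integrable_const 1).indicator hS2
  rw [integral_add (hint1.const_mul _) (hint2.const_mul _), integral_const_mul,
    integral_const_mul, integral_indicator_const _ hS1, integral_indicator_const _ hS2]
  simp
  rfl
end

section
/- Minimizing L'_θ over classifiers is equivalent to maximizing the policy value U_θ: for any classifier f, E[Y(f(X))] - 2θ·P(f(X) = 1) = (1/2)E[Y(+1) + Y(-1)] - θ - (1/2)·L'_θ(f), where L'_θ(f) = E[f(X)(2θ - YT/Q)]. -/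
open MeasureTheory ProbabilityTheory
open Filter Topology


section helpers
variable {Ω : Type*} {m mΩ : MeasurableSpace Ω} {μ : Measure Ω} [IsProbabilityMeasure μ]

lemma int_bdd {g : Ω → ℝ} (hg : Measurable g) {C : ℝ} (hb : ∀ ω, |g ω| ≤ C) :
    Integrable g μ :=
  (integrable_const C).mono' hg.aestronglyMeasurable
    (Filter.Eventually.of_forall (fun ω => by simpa using hb ω))

lemma pullout (hm : m ≤ mΩ) {h g : Ω → ℝ}
    (hh : StronglyMeasurable[m] h) {C : ℝ} (hhb : ∀ ω, |h ω| ≤ C)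
    (hg : Integrable g μ) :
    ∫ ω, h ω * g ω ∂μ = ∫ ω, h ω * (μ[g|m]) ω ∂μ := by
  have hint : Integrable (fun ω => h ω * g ω) μ :=
    hg.bdd_mul (hh.mono hm).aestronglyMeasurable (Eventually.of_forall fun ω => by simpa using hhb ω)
  have h1 := condExp_mul_of_stronglyMeasurable_left hh hint hg
  calc ∫ ω, h ω * g ω ∂μ = ∫ ω, (μ[fun ω => h ω * g ω|m]) ω ∂μ :=
        (integral_condExp hm).symm
    _ = ∫ ω, h ω * (μ[g|m]) ω ∂μ := integral_congr_ae h1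

lemma key (hm : m ≤ mΩ)
    {e : Ω → ℝ} (hem : Measurable[m] e) (he0 : ∀ ω, 0 < e ω) (he1 : ∀ ω, e ω ≤ 1)
    {A : Set Ω} (hA : MeasurableSet A)
    (heA : (μ[A.indicator (fun _ => (1:ℝ)) | m]) =ᵐ[μ] e)
    {b c : Ω → ℝ} (hb : Measurable b) (hbv : ∀ ω, |b ω| ≤ 1)
    (hcm : StronglyMeasurable[m] c) (hcb : ∀ᵐ ω ∂μ, |c ω| ≤ 1)
    (hbc : (μ[fun ω => b ω * A.indicator (fun _ => (1:ℝ)) ω | m]) =ᵐ[μ]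
      fun ω => c ω * e ω) :
    Integrable (fun ω => b ω * A.indicator (fun _ => (1:ℝ)) ω / e ω) μ ∧
      ∫ ω, b ω * A.indicator (fun _ => (1:ℝ)) ω / e ω ∂μ = ∫ ω, c ω ∂μ := by
  set I : Ω → ℝ := A.indicator (fun _ => (1:ℝ)) with hI
  have hIm : Measurable I := (measurable_const.indicator hA)
  have hI0 : ∀ ω, 0 ≤ I ω := fun ω => Set.indicator_nonneg (fun _ _ => zero_le_one) ω
  have hI1 : ∀ ω, I ω ≤ 1 := fun ω => Set.indicator_le_self' (fun _ _ => zero_le_one) ω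
  have he : Measurable e := hem.mono hm le_rfl
  set h : ℕ → Ω → ℝ := fun n ω => min (1 / e ω) (n : ℝ) with hh
  have hhm : ∀ n, Measurable[m] (h n) := fun n =>
    (((measurable_const : Measurable[m] fun _ : Ω => (1:ℝ)).div hem).min
      (measurable_const : Measurable[m] fun _ : Ω => ((n:ℝ))))
  have hh0 : ∀ n ω, 0 ≤ h n ω := fun n ω =>
    le_min (one_div_nonneg.mpr (he0 ω).le) (Nat.cast_nonneg n)
  have hhn : ∀ n ω, |h n ω| ≤ (n : ℝ) := fun n ω => by
    rw [abs_of_nonneg (hh0 n ω)]; exact min_le_right _ _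
  have hhle : ∀ n ω, h n ω ≤ 1 / e ω := fun n ω => min_le_left _ _
  have hhe : ∀ n ω, h n ω * e ω ≤ 1 := fun n ω => by
    have := mul_le_mul_of_nonneg_right (hhle n ω) (he0 ω).le
    simpa [one_div, inv_mul_cancel₀ (he0 ω).ne'] using this
  have hheventually : ∀ ω, ∀ n, ⌈1 / e ω⌉₊ ≤ n → h n ω = 1 / e ω := fun ω n hn =>
    min_eq_left (le_trans (Nat.le_ceil _) (Nat.cast_le.mpr hn))
  have hbI_int : Integrable (fun ω => b ω * I ω) μ :=
    int_bdd (hb.mul hIm) (C := 1) (fun ω => by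
      rw [abs_mul]
      calc |b ω| * |I ω| ≤ 1 * 1 := mul_le_mul (hbv ω)
            (by rw [abs_of_nonneg (hI0 ω)]; exact hI1 ω) (abs_nonneg _) zero_le_one
        _ = 1 := one_mul 1)
  have hI_int : Integrable I μ := int_bdd hIm (C := 1)
    (fun ω => by rw [abs_of_nonneg (hI0 ω)]; exact hI1 ω)
  have hIe_meas : Measurable (fun ω => I ω / e ω) := hIm.div he
  have hIe_nonneg : ∀ ω, 0 ≤ I ω / e ω := fun ω => div_nonneg (hI0 ω) (he0 ω).le
  have hhI_int : ∀ n, Integrable (fun ω => h n ω * I ω) μ := fun n =>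
    int_bdd (((hhm n).mono hm le_rfl).mul hIm) (C := (n:ℝ)) (fun ω => by
      rw [abs_mul]
      calc |h n ω| * |I ω| ≤ (n:ℝ) * 1 := mul_le_mul (hhn n ω)
            (by rw [abs_of_nonneg (hI0 ω)]; exact hI1 ω) (abs_nonneg _) (Nat.cast_nonneg n)
        _ = (n:ℝ) := mul_one _)
  have hIe_int : Integrable (fun ω => I ω / e ω) μ := by
    have hstep : ∀ n : ℕ, ∫ ω, h n ω * I ω ∂μ ≤ 1 := by
      intro n
      have h1 : ∫ ω, h n ω * I ω ∂μ = ∫ ω, h n ω * (μ[I|m]) ω ∂μ :=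
        pullout hm ((hhm n).stronglyMeasurable) (hhn n) hI_int
      have h2 : ∫ ω, h n ω * (μ[I|m]) ω ∂μ = ∫ ω, h n ω * e ω ∂μ :=
        integral_congr_ae (heA.mono (fun ω hω => by dsimp only; rw [hω]))
      rw [h1, h2]
      calc ∫ ω, h n ω * e ω ∂μ ≤ ∫ _ω, (1:ℝ) ∂μ := by
            refine integral_mono ?_ (integrable_const 1) (fun ω => hhe n ω)
            exact int_bdd (((hhm n).mono hm le_rfl).mul he) (C := (n:ℝ))
              (fun ω => by
                rw [abs_mul]
                calc |h n ω| * |e ω| ≤ (n:ℝ) * 1 := mul_le_mul (hhn n ω)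
                      (by rw [abs_of_nonneg (he0 ω).le]; exact he1 ω) (abs_nonneg _)
                      (Nat.cast_nonneg n)
                  _ = (n:ℝ) := mul_one _)
        _ = 1 := by simp
    refine ⟨hIe_meas.aestronglyMeasurable, ?_⟩
    rw [hasFiniteIntegral_iff_ofReal (Eventually.of_forall hIe_nonneg)]
    have hmono : Monotone (fun n : ℕ => fun ω => ENNReal.ofReal (h n ω * I ω)) := by
      intro n k hnk ω
      exact ENNReal.ofReal_le_ofReal (mul_le_mul_of_nonneg_right
        (min_le_min le_rfl (Nat.cast_le.mpr hnk)) (hI0 ω))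
    have hsup : ∀ ω, (⨆ n : ℕ, ENNReal.ofReal (h n ω * I ω))
        = ENNReal.ofReal (I ω / e ω) := by
      intro ω
      apply le_antisymm
      · refine iSup_le (fun n => ENNReal.ofReal_le_ofReal ?_)
        calc h n ω * I ω ≤ (1 / e ω) * I ω :=
              mul_le_mul_of_nonneg_right (hhle n ω) (hI0 ω)
          _ = I ω / e ω := one_div_mul_eq_div _ _
      · refine le_trans (le_of_eq ?_) (le_iSup _ ⌈1 / e ω⌉₊)
        rw [hheventually ω _ le_rfl, one_div_mul_eq_div]
    calc ∫⁻ ω, ENNReal.ofReal (I ω / e ω) ∂μ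
        = ∫⁻ ω, ⨆ n : ℕ, ENNReal.ofReal (h n ω * I ω) ∂μ := by
          refine lintegral_congr (fun ω => (hsup ω).symm)
      _ = ⨆ n : ℕ, ∫⁻ ω, ENNReal.ofReal (h n ω * I ω) ∂μ := by
          refine lintegral_iSup (fun n => ?_) (fun n k hnk ω => hmono hnk ω)
          exact (((hhm n).mono hm le_rfl).mul hIm).ennreal_ofReal
      _ ≤ 1 := by
          refine iSup_le (fun n => ?_)
          rw [← ofReal_integral_eq_lintegral_ofReal (hhI_int n)
            (Eventually.of_forall (fun ω => mul_nonneg (hh0 n ω) (hI0 ω)))]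
          calc ENNReal.ofReal (∫ ω, h n ω * I ω ∂μ) ≤ ENNReal.ofReal 1 :=
                ENNReal.ofReal_le_ofReal (hstep n)
            _ = 1 := ENNReal.ofReal_one
      _ < ⊤ := ENNReal.one_lt_top
  have hbIe_int : Integrable (fun ω => b ω * I ω / e ω) μ := by
    have := hIe_int.bdd_mul hb.aestronglyMeasurable (Eventually.of_forall fun ω => by simpa using hbv ω)
    refine this.congr (Eventually.of_forall (fun ω => ?_))
    exact (mul_div_assoc _ _ _).symm
  refine ⟨hbIe_int, ?_⟩
  -- the limit argument
  have heq : ∀ n, ∫ ω, h n ω * (b ω * I ω) ∂μ = ∫ ω, h n ω * (c ω * e ω) ∂μ := by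
    intro n
    rw [pullout hm ((hhm n).stronglyMeasurable) (hhn n) hbI_int]
    exact integral_congr_ae (hbc.mono (fun ω hω => by dsimp only; rw [hω]))
  have hL : Tendsto (fun n => ∫ ω, h n ω * (b ω * I ω) ∂μ) atTop
      (𝓝 (∫ ω, b ω * I ω / e ω ∂μ)) := by
    refine tendsto_integral_of_dominated_convergence (fun ω => I ω / e ω)
      (fun n => (((hhm n).mono hm le_rfl).mul (hb.mul hIm)).aestronglyMeasurable)
      hIe_int (fun n => Eventually.of_forall (fun ω => ?_))
      (Eventually.of_forall (fun ω => ?_))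
    · rw [Real.norm_eq_abs, abs_mul, abs_mul, abs_of_nonneg (hh0 n ω),
        abs_of_nonneg (hI0 ω)]
      calc h n ω * (|b ω| * I ω) ≤ (1 / e ω) * (1 * I ω) := by
            refine mul_le_mul (hhle n ω) (mul_le_mul_of_nonneg_right (hbv ω) (hI0 ω))
              (mul_nonneg (abs_nonneg _) (hI0 ω)) (one_div_nonneg.mpr (he0 ω).le)
        _ = I ω / e ω := by rw [one_mul, one_div_mul_eq_div]
    · refine tendsto_atTop_of_eventually_const (i₀ := ⌈1 / e ω⌉₊) (fun n hn => ?_)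
      rw [hheventually ω n hn, one_div, inv_mul_eq_div]
  have hR : Tendsto (fun n => ∫ ω, h n ω * (c ω * e ω) ∂μ) atTop
      (𝓝 (∫ ω, c ω ∂μ)) := by
    refine tendsto_integral_of_dominated_convergence (fun _ => (1:ℝ))
      (fun n => (((hhm n).mono hm le_rfl).mul
        (((hcm.mono hm).measurable).mul he)).aestronglyMeasurable)
      (integrable_const 1) (fun n => ?_) ?_
    · filter_upwards [hcb] with ω hcω
      rw [Real.norm_eq_abs, abs_mul, abs_mul, abs_of_nonneg (hh0 n ω),
        abs_of_nonneg (he0 ω).le]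
      calc h n ω * (|c ω| * e ω) = (h n ω * e ω) * |c ω| := by ring
        _ ≤ 1 * 1 := mul_le_mul (hhe n ω) hcω (abs_nonneg _) zero_le_one
        _ = 1 := one_mul 1
    · refine Eventually.of_forall (fun ω => ?_)
      refine tendsto_atTop_of_eventually_const (i₀ := ⌈1 / e ω⌉₊) (fun n hn => ?_)
      rw [hheventually ω n hn, one_div, inv_mul_eq_div]
      exact div_eq_iff (he0 ω).ne' |>.mpr rfl
  have := heq  -- L n = R n
  have hL' : Tendsto (fun n => ∫ ω, h n ω * (c ω * e ω) ∂μ) atTop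
      (𝓝 (∫ ω, b ω * I ω / e ω ∂μ)) := by
    refine hL.congr (fun n => heq n)
  exact tendsto_nhds_unique hL' hR

lemma ind_abs_le {A : Set Ω} (ω : Ω) : |A.indicator (fun _ => (1:ℝ)) ω| ≤ 1 := by
  rw [abs_of_nonneg (Set.indicator_nonneg (fun _ _ => zero_le_one) ω)]
  exact Set.indicator_le_self' (fun _ _ => zero_le_one) ω

lemma condexp_pm_indicator (hm : m ≤ mΩ) {Z : Ω → ℝ} (hZ : Measurable Z)
    (hZv : ∀ ω, Z ω = 1 ∨ Z ω = -1) {A : Set Ω} (hA : MeasurableSet A)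
    {e : Ω → ℝ}
    (hfact : (μ[((({ω | Z ω = 1}) ∩ A).indicator (fun _ => (1:ℝ)))|m]) =ᵐ[μ]
      fun ω => (μ[(({ω | Z ω = 1}).indicator (fun _ => (1:ℝ)))|m]) ω *
        (μ[(A.indicator (fun _ => (1:ℝ)))|m]) ω)
    (heA : (μ[A.indicator (fun _ => (1:ℝ))|m]) =ᵐ[μ] e) :
    (μ[fun ω => Z ω * A.indicator (fun _ => (1:ℝ)) ω|m]) =ᵐ[μ]
      fun ω => (μ[Z|m]) ω * e ω := by
  set S : Set Ω := {ω | Z ω = 1} with hSdef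
  have hS : MeasurableSet S := hZ (measurableSet_singleton 1)
  set IS : Ω → ℝ := S.indicator (fun _ => (1:ℝ)) with hISdef
  set IA : Ω → ℝ := A.indicator (fun _ => (1:ℝ)) with hIAdef
  set ISA : Ω → ℝ := (S ∩ A).indicator (fun _ => (1:ℝ)) with hISAdef
  have hIS_int : Integrable IS μ := int_bdd (measurable_const.indicator hS) ind_abs_le
  have hIA_int : Integrable IA μ := int_bdd (measurable_const.indicator hA) ind_abs_le
  have hISA_int : Integrable ISA μ :=
    int_bdd (measurable_const.indicator (hS.inter hA)) ind_abs_le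
  have hmemS : ∀ ω, ω ∉ S → Z ω = -1 := by
    intro ω hω
    rcases hZv ω with h1 | h1
    · exact absurd h1 hω
    · exact h1
  have hP1 : (fun ω => Z ω * IA ω) = ISA + ISA - IA := by
    funext ω
    simp only [Pi.sub_apply, Pi.add_apply, hISAdef, hIAdef]
    by_cases hS1 : ω ∈ S <;> by_cases hA1 : ω ∈ A
    · rw [Set.indicator_of_mem (Set.mem_inter hS1 hA1), Set.indicator_of_mem hA1,
        show Z ω = 1 from hS1]; ring
    · rw [Set.indicator_of_notMem (fun h : ω ∈ S ∩ A => hA1 h.2),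
        Set.indicator_of_notMem hA1]; ring
    · rw [Set.indicator_of_notMem (fun h : ω ∈ S ∩ A => hS1 h.1),
        Set.indicator_of_mem hA1, hmemS ω hS1]; ring
    · rw [Set.indicator_of_notMem (fun h : ω ∈ S ∩ A => hA1 h.2),
        Set.indicator_of_notMem hA1]; ring
  have hP2 : Z = IS + IS - fun _ => (1:ℝ) := by
    funext ω
    simp only [Pi.sub_apply, Pi.add_apply, hISdef]
    by_cases hS1 : ω ∈ S
    · rw [Set.indicator_of_mem hS1, show Z ω = 1 from hS1]; ring
    · rw [Set.indicator_of_notMem hS1, hmemS ω hS1]; ring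
  have hC1 : (μ[fun ω => Z ω * IA ω|m]) =ᵐ[μ]
      fun ω => (μ[ISA|m]) ω + (μ[ISA|m]) ω - (μ[IA|m]) ω := by
    rw [hP1]
    have h1 := condExp_sub (μ := μ) (m := m) (hISA_int.add hISA_int) hIA_int
    have h2 := condExp_add (μ := μ) (m := m) hISA_int hISA_int
    filter_upwards [h1, h2] with ω h1 h2
    simp only [Pi.sub_apply, Pi.add_apply] at h1 h2 ⊢
    rw [h1, h2]
  have hC2 : (μ[Z|m]) =ᵐ[μ] fun ω => (μ[IS|m]) ω + (μ[IS|m]) ω - 1 := by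
    rw [hP2]
    have h1 := condExp_sub (μ := μ) (m := m) (hIS_int.add hIS_int)
      (integrable_const (1:ℝ))
    have h2 := condExp_add (μ := μ) (m := m) hIS_int hIS_int
    have h3 := condExp_const hm (1 : ℝ) (μ := μ)
    filter_upwards [h1, h2] with ω h1 h2
    simp only [Pi.sub_apply, Pi.add_apply] at h1 h2 ⊢
    rw [h1, h2, h3]
  filter_upwards [hC1, hC2, hfact, heA] with ω h1 h2 h3 h4
  rw [h1, h2, h3, h4]
  ring

lemma key2 (hm : m ≤ mΩ) {φ Z e : Ω → ℝ} (hφm : Measurable[m] φ) (hφb : ∀ ω, |φ ω| ≤ 1)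
    (hZ : Measurable Z) (hZb : ∀ ω, |Z ω| ≤ 1) {A : Set Ω} (hA : MeasurableSet A)
    (hZIA : (μ[fun ω => Z ω * A.indicator (fun _ => (1:ℝ)) ω|m]) =ᵐ[μ]
      fun ω => (μ[Z|m]) ω * e ω) :
    (μ[fun ω => (φ ω * Z ω) * A.indicator (fun _ => (1:ℝ)) ω|m]) =ᵐ[μ]
      fun ω => (μ[fun ω => φ ω * Z ω|m]) ω * e ω := by
  set IA : Ω → ℝ := A.indicator (fun _ => (1:ℝ)) with hIAdef
  have hIAm : Measurable IA := measurable_const.indicator hA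
  have hφs : StronglyMeasurable[m] φ := hφm.stronglyMeasurable
  have hZIA_int : Integrable (fun ω => Z ω * IA ω) μ :=
    int_bdd (hZ.mul hIAm) (C := 1) (fun ω => by
      rw [abs_mul]
      exact (mul_le_mul (hZb ω) (ind_abs_le ω) (abs_nonneg _) zero_le_one).trans_eq
        (one_mul 1))
  have hZ_int : Integrable Z μ := int_bdd hZ hZb
  have hφZIA_int : Integrable (fun ω => φ ω * (Z ω * IA ω)) μ :=
    hZIA_int.bdd_mul ((hφm.mono hm le_rfl).aestronglyMeasurable)
      (Eventually.of_forall fun ω => by simpa using hφb ω)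
  have hφZ_int : Integrable (fun ω => φ ω * Z ω) μ :=
    hZ_int.bdd_mul ((hφm.mono hm le_rfl).aestronglyMeasurable)
      (Eventually.of_forall fun ω => by simpa using hφb ω)
  have h1 := condExp_mul_of_stronglyMeasurable_left hφs hφZIA_int hZIA_int
  have h2 := condExp_mul_of_stronglyMeasurable_left hφs hφZ_int hZ_int
  have e1 : (fun ω => (φ ω * Z ω) * IA ω) = φ * (fun ω => Z ω * IA ω) := by
    funext ω; simp [mul_assoc]
  have e2 : (fun ω => φ ω * Z ω) = φ * Z := rfl
  rw [e1, e2]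
  filter_upwards [h1, h2, hZIA] with ω h1 h2 h3
  simp only [Pi.mul_apply] at h1 h2
  rw [h1, h3, h2]
  ring

end helpers

section mainaux
variable {Ω : Type*} {m mΩ : MeasurableSpace Ω} {μ : Measure Ω} [IsProbabilityMeasure μ]

lemma main_aux [i : @StandardBorelSpace Ω mΩ] (hm : m ≤ mΩ)
    (Yp Ym T : Ω → ℝ) (hYp : Measurable Yp) (hYm : Measurable Ym) (hT : Measurable T)
    (hYpv : ∀ ω, Yp ω = 1 ∨ Yp ω = -1) (hYmv : ∀ ω, Ym ω = 1 ∨ Ym ω = -1)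
    (hTv : ∀ ω, T ω = 1 ∨ T ω = -1)
    (unconf : CondIndepFun m hm (fun ω => (Yp ω, Ym ω)) T μ)
    (eX : Ω → ℝ) (heXmeas : Measurable[m] eX)
    (heX : eX =ᵐ[μ] μ[{ω | T ω = 1}.indicator (fun _ => (1 : ℝ)) | m])
    (heXb : ∀ ω, 0 < eX ω ∧ eX ω < 1)
    (Q : Ω → ℝ) (hQ : ∀ ω, Q ω = 1 / 2 + (eX ω - 1 / 2) * T ω)
    (Y : Ω → ℝ) (hY : ∀ ω, Y ω = if T ω = 1 then Yp ω else Ym ω)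
    (φ : Ω → ℝ) (hφm : Measurable[m] φ) (hφ : Measurable φ)
    (hφv : ∀ ω, φ ω = 1 ∨ φ ω = -1)
    (θ : ℝ) (hθ : 0 ≤ θ ∧ θ ≤ 1) :
    (∫ ω, (if φ ω = 1 then Yp ω else Ym ω) ∂μ)
        - 2 * θ * (μ {ω | φ ω = 1}).toReal
      = (1 / 2) * (∫ ω, Yp ω + Ym ω ∂μ) - θ
        - (1 / 2) * ∫ ω, φ ω * (2 * θ - Y ω * T ω / Q ω) ∂μ := by
  classical
  have hφb : ∀ ω, |φ ω| ≤ 1 := fun ω => by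
    rcases hφv ω with h | h <;> rw [h] <;> norm_num
  have hYpb : ∀ ω, |Yp ω| ≤ 1 := fun ω => by
    rcases hYpv ω with h | h <;> rw [h] <;> norm_num
  have hYmb : ∀ ω, |Ym ω| ≤ 1 := fun ω => by
    rcases hYmv ω with h | h <;> rw [h] <;> norm_num
  have hb1 : ∀ ω, |φ ω * Yp ω| ≤ 1 := fun ω => by
    rw [abs_mul]
    exact (mul_le_mul (hφb ω) (hYpb ω) (abs_nonneg _) zero_le_one).trans_eq (one_mul 1)
  have hb2 : ∀ ω, |φ ω * Ym ω| ≤ 1 := fun ω => by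
    rw [abs_mul]
    exact (mul_le_mul (hφb ω) (hYmb ω) (abs_nonneg _) zero_le_one).trans_eq (one_mul 1)
  set A : Set Ω := {ω | T ω = 1} with hAdef
  have hA : MeasurableSet A := hT (measurableSet_singleton 1)
  -- conditional independence consequences
  have hCI := (ProbabilityTheory.condIndepFun_iff_condExp_inter_preimage_eq_mul
    (hYp.prodMk hYm) hT).mp unconf
  have hpreYp : (fun ω => (Yp ω, Ym ω)) ⁻¹' (({1} : Set ℝ) ×ˢ (Set.univ : Set ℝ))
      = {ω | Yp ω = 1} := by
    ext ω; simp [Set.mem_prod, eq_comm]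
  have hpreYm : (fun ω => (Yp ω, Ym ω)) ⁻¹' ((Set.univ : Set ℝ) ×ˢ ({1} : Set ℝ))
      = {ω | Ym ω = 1} := by
    ext ω; simp [Set.mem_prod, eq_comm]
  have hpreT1 : T ⁻¹' ({1} : Set ℝ) = A := rfl
  have hpreT2 : T ⁻¹' (({1} : Set ℝ)ᶜ) = Aᶜ := rfl
  have factp := hCI (({1} : Set ℝ) ×ˢ Set.univ) ({1} : Set ℝ)
    ((measurableSet_singleton 1).prod MeasurableSet.univ) (measurableSet_singleton 1)
  rw [hpreYp, hpreT1] at factp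
  have factm := hCI (Set.univ ×ˢ ({1} : Set ℝ)) (({1} : Set ℝ)ᶜ)
    (MeasurableSet.univ.prod (measurableSet_singleton 1))
    (measurableSet_singleton 1).compl
  rw [hpreYm, hpreT2] at factm
  have eA : (μ[A.indicator (fun _ => (1:ℝ))|m]) =ᵐ[μ] eX := heX.symm
  have eAc : (μ[(Aᶜ).indicator (fun _ => (1:ℝ))|m]) =ᵐ[μ] fun ω => 1 - eX ω := by
    have hptw : (Aᶜ).indicator (fun _ => (1:ℝ))
        = (fun _ => (1:ℝ)) - A.indicator (fun _ => (1:ℝ)) := by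
      funext ω
      by_cases hω : ω ∈ A
      · rw [Pi.sub_apply, Set.indicator_of_notMem (by simpa using hω),
          Set.indicator_of_mem hω]; norm_num
      · rw [Pi.sub_apply, Set.indicator_of_mem (by simpa using hω),
          Set.indicator_of_notMem hω]; norm_num
    rw [hptw]
    have h1 := condExp_sub (μ := μ) (m := m) (integrable_const (1:ℝ))
      (int_bdd (measurable_const.indicator hA) ind_abs_le)
    have h2 := condExp_const hm (1 : ℝ) (μ := μ)
    filter_upwards [h1, eA] with ω h1 hω
    rw [h1]
    simp only [Pi.sub_apply]
    rw [h2, hω]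
  -- Yp branch
  have cYpA := condexp_pm_indicator (μ := μ) hm hYp hYpv hA factp eA
  have hbc1 := key2 (μ := μ) hm hφm hφb hYp hYpb hA cYpA
  have hcb1 : ∀ᵐ ω ∂μ, |(μ[fun ω => φ ω * Yp ω|m]) ω| ≤ 1 := by
    have := ae_bdd_condExp_of_ae_bdd (μ := μ) (m := m) (R := 1) (f := fun ω => φ ω * Yp ω)
      (Eventually.of_forall (fun ω => by simpa using hb1 ω))
    simpa using this
  have K1 := key (μ := μ) hm heXmeas (fun ω => (heXb ω).1) (fun ω => (heXb ω).2.le)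
    hA eA (hφ.mul hYp) hb1 stronglyMeasurable_condExp hcb1 hbc1
  have hI1 : ∫ ω, (φ ω * Yp ω) * A.indicator (fun _ => (1:ℝ)) ω / eX ω ∂μ
      = ∫ ω, φ ω * Yp ω ∂μ := K1.2.trans (integral_condExp hm)
  -- Ym branch
  have he'm : Measurable[m] (fun ω => 1 - eX ω) := measurable_const.sub heXmeas
  have he'0 : ∀ ω, 0 < 1 - eX ω := fun ω => sub_pos.mpr (heXb ω).2
  have he'1 : ∀ ω, 1 - eX ω ≤ 1 := fun ω => sub_le_self _ (heXb ω).1.le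
  have cYmA := condexp_pm_indicator (μ := μ) hm hYm hYmv hA.compl factm eAc
  have hbc2 := key2 (μ := μ) hm hφm hφb hYm hYmb hA.compl cYmA
  have hcb2 : ∀ᵐ ω ∂μ, |(μ[fun ω => φ ω * Ym ω|m]) ω| ≤ 1 := by
    have := ae_bdd_condExp_of_ae_bdd (μ := μ) (m := m) (R := 1) (f := fun ω => φ ω * Ym ω)
      (Eventually.of_forall (fun ω => by simpa using hb2 ω))
    simpa using this
  have K2 := key (μ := μ) hm he'm he'0 he'1 hA.compl eAc (hφ.mul hYm) hb2
    stronglyMeasurable_condExp hcb2 hbc2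
  have hI2 : ∫ ω, (φ ω * Ym ω) * (Aᶜ).indicator (fun _ => (1:ℝ)) ω / (1 - eX ω) ∂μ
      = ∫ ω, φ ω * Ym ω ∂μ := K2.2.trans (integral_condExp hm)
  -- pointwise decomposition of the loss integrand
  have hptw : ∀ ω, φ ω * (2 * θ - Y ω * T ω / Q ω)
      = (2 * θ * φ ω - (φ ω * Yp ω) * A.indicator (fun _ => (1:ℝ)) ω / eX ω)
        + (φ ω * Ym ω) * (Aᶜ).indicator (fun _ => (1:ℝ)) ω / (1 - eX ω) := by
    intro ω
    rcases hTv ω with h1 | h1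
    · have hmem : ω ∈ A := h1
      rw [hY ω, hQ ω, if_pos h1, h1, Set.indicator_of_mem hmem,
        Set.indicator_of_notMem (by simpa using hmem : ω ∉ Aᶜ),
        show (1:ℝ)/2 + (eX ω - 1/2) * 1 = eX ω from by ring]
      ring
    · have hne : T ω ≠ 1 := by rw [h1]; norm_num
      have hmem : ω ∉ A := hne
      rw [hY ω, hQ ω, if_neg hne, h1, Set.indicator_of_notMem hmem,
        Set.indicator_of_mem (by simpa using hmem : ω ∈ Aᶜ),
        show (1:ℝ)/2 + (eX ω - 1/2) * (-1) = 1 - eX ω from by ring]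
      ring
  -- integrability of the bounded pieces
  have iφ : Integrable φ μ := int_bdd hφ hφb
  have iYp : Integrable Yp μ := int_bdd hYp hYpb
  have iYm : Integrable Ym μ := int_bdd hYm hYmb
  have iφYp : Integrable (fun ω => φ ω * Yp ω) μ := int_bdd (hφ.mul hYp) hb1
  have iφYm : Integrable (fun ω => φ ω * Ym ω) μ := int_bdd (hφ.mul hYm) hb2
  have i2θ : Integrable (fun ω => 2 * θ * φ ω) μ :=
    int_bdd (measurable_const.mul hφ) (C := 2) (fun ω => by
      rw [abs_mul]
      calc |2 * θ| * |φ ω| ≤ 2 * 1 := by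
            refine mul_le_mul ?_ (hφb ω) (abs_nonneg _) (by norm_num)
            rw [abs_mul, abs_of_nonneg (by norm_num : (0:ℝ) ≤ 2),
              abs_of_nonneg hθ.1]
            nlinarith [hθ.2]
        _ = 2 := by norm_num)
  -- split the loss integral
  have hsplit : ∫ ω, φ ω * (2 * θ - Y ω * T ω / Q ω) ∂μ
      = 2 * θ * (∫ ω, φ ω ∂μ) - (∫ ω, φ ω * Yp ω ∂μ)
        + ∫ ω, φ ω * Ym ω ∂μ := by
    rw [show (fun ω => φ ω * (2 * θ - Y ω * T ω / Q ω))
        = fun ω => (2 * θ * φ ω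
            - (φ ω * Yp ω) * A.indicator (fun _ => (1:ℝ)) ω / eX ω)
          + (φ ω * Ym ω) * (Aᶜ).indicator (fun _ => (1:ℝ)) ω / (1 - eX ω)
      from funext hptw]
    have e1 := integral_add (μ := μ)
      (f := fun ω => 2 * θ * φ ω
        - (φ ω * Yp ω) * A.indicator (fun _ => (1:ℝ)) ω / eX ω)
      (g := fun ω => (φ ω * Ym ω) * (Aᶜ).indicator (fun _ => (1:ℝ)) ω / (1 - eX ω))
      (i2θ.sub K1.1) K2.1
    have e2 := integral_sub (μ := μ) (f := fun ω => 2 * θ * φ ω)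
      (g := fun ω => (φ ω * Yp ω) * A.indicator (fun _ => (1:ℝ)) ω / eX ω) i2θ K1.1
    rw [e1, e2, hI1, hI2, integral_const_mul]
  -- the welfare integral
  have hiff : ∫ ω, (if φ ω = 1 then Yp ω else Ym ω) ∂μ
      = (∫ ω, Yp ω + Ym ω ∂μ) / 2
        + ((∫ ω, φ ω * Yp ω ∂μ) - ∫ ω, φ ω * Ym ω ∂μ) / 2 := by
    rw [show (fun ω => (if φ ω = 1 then Yp ω else Ym ω))
        = fun ω => ((Yp ω + Ym ω) + (φ ω * Yp ω - φ ω * Ym ω)) * (1/2) from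
      funext (fun ω => by
        rcases hφv ω with h | h
        · rw [if_pos h, h]; ring
        · rw [if_neg (by rw [h]; norm_num), h]; ring)]
    have e1 := integral_add (μ := μ) (f := fun ω => Yp ω + Ym ω)
      (g := fun ω => φ ω * Yp ω - φ ω * Ym ω) (iYp.add iYm) (iφYp.sub iφYm)
    have e2 := integral_sub (μ := μ) (f := fun ω => φ ω * Yp ω)
      (g := fun ω => φ ω * Ym ω) iφYp iφYm
    rw [integral_mul_const, e1, e2]
    ring
  -- the probability term
  have hprob : (μ {ω | φ ω = 1}).toReal = (1 + ∫ ω, φ ω ∂μ) / 2 := by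
    have hms : MeasurableSet {ω | φ ω = 1} := hφ (measurableSet_singleton 1)
    rw [← measureReal_def, ← integral_indicator_one hms]
    rw [show (fun ω => Set.indicator {ω | φ ω = 1} (1 : Ω → ℝ) ω)
        = fun ω => (1 + φ ω) * (1/2) from
      funext (fun ω => by
        rcases hφv ω with h | h
        · rw [Set.indicator_of_mem (by exact h : ω ∈ {ω | φ ω = 1}), Pi.one_apply, h]
          norm_num
        · rw [Set.indicator_of_notMem
            (by norm_num [Set.mem_setOf_eq, h] : ω ∉ {ω | φ ω = 1}), h]; norm_num)]
    have e1 := integral_add (μ := μ) (f := fun _ => (1:ℝ)) (g := φ)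
      (integrable_const 1) iφ
    rw [integral_mul_const, e1]
    simp only [integral_const, measure_univ, probReal_univ, ENNReal.toReal_one, smul_eq_mul, mul_one,
      one_mul]
    ring
  rw [hsplit, hiff, hprob]
  ring

end mainaux

/-- Minimizing `L'_θ` is equivalent to maximizing the policy value `U_θ`:
`E[Y(f(X))] - 2θ·P(f(X)=1) = (1/2)E[Y(+1)+Y(-1)] - θ - (1/2)·L'_θ(f)`, where
`L'_θ(f) = E[f(X)(2θ - YT/Q)]`. Monotonicity is NOT assumed. -/
theorem stmt_8 {Ω : Type*} [MeasurableSpace Ω] [StandardBorelSpace Ω]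
    (μ : Measure Ω) [IsProbabilityMeasure μ]
    {p : ℕ} (X : Ω → (Fin p → ℝ)) (hX : Measurable X)
    (Yp Ym T : Ω → ℝ) (hYp : Measurable Yp) (hYm : Measurable Ym) (hT : Measurable T)
    (hYpv : ∀ ω, Yp ω = 1 ∨ Yp ω = -1) (hYmv : ∀ ω, Ym ω = 1 ∨ Ym ω = -1)
    (hTv : ∀ ω, T ω = 1 ∨ T ω = -1)
    (hmX : MeasurableSpace.comap X inferInstance ≤ ‹MeasurableSpace Ω›)
    (unconf : CondIndepFun (MeasurableSpace.comap X inferInstance) hmX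
      (fun ω => (Yp ω, Ym ω)) T μ)
    (eX : Ω → ℝ) (heXmeas : Measurable[MeasurableSpace.comap X inferInstance] eX)
    (heX : eX =ᵐ[μ] μ[{ω | T ω = 1}.indicator (fun _ => (1 : ℝ)) |
      MeasurableSpace.comap X inferInstance])
    (heXb : ∀ ω, 0 < eX ω ∧ eX ω < 1)
    (Q : Ω → ℝ) (hQ : ∀ ω, Q ω = 1 / 2 + (eX ω - 1 / 2) * T ω)
    (Y : Ω → ℝ) (hY : ∀ ω, Y ω = if T ω = 1 then Yp ω else Ym ω)
    (f : (Fin p → ℝ) → ℝ) (hf : Measurable f) (hfv : ∀ x, f x = 1 ∨ f x = -1)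
    (θ : ℝ) (hθ : 0 ≤ θ ∧ θ ≤ 1) :
    (∫ ω, (if f (X ω) = 1 then Yp ω else Ym ω) ∂μ)
        - 2 * θ * (μ {ω | f (X ω) = 1}).toReal
      = (1 / 2) * (∫ ω, Yp ω + Ym ω ∂μ) - θ
        - (1 / 2) * ∫ ω, f (X ω) * (2 * θ - Y ω * T ω / Q ω) ∂μ := by
  exact main_aux hmX Yp Ym T hYp hYm hT hYpv hYmv hTv unconf eX heXmeas heX heXb
    Q hQ Y hY (fun ω => f (X ω)) (hf.comp (Measurable.of_comap_le le_rfl)) (hf.comp hX)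
    (fun ω => hfv (X ω)) θ hθ
end

section
/- Under monotonicity, unconfoundedness, and Q = 1/2, the observable label Z = YT satisfies P(Z = z | X) = (1 + z·ρ(X))/2 for z ∈ {-1,+1}, where ρ(X) = P(R = +1 | X). -/
open MeasureTheory

/-- Under monotonicity, unconfoundedness and equiprobable treatment (`Q = 1/2`), the observable
label `Z = YT` satisfies `P(Z = z | X) = (1 + z·ρ(X))/2` for `z ∈ {-1,+1}`,
where `ρ(X) = P(R = +1 | X)`. -/
theorem stmt_11 {Ω : Type*} [MeasurableSpace Ω] (μ : Measure Ω) [IsProbabilityMeasure μ]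
    {p : ℕ} (X : Ω → (Fin p → ℝ)) (hX : Measurable X)
    (Yp Ym T : Ω → ℝ) (hYp : Measurable Yp) (hYm : Measurable Ym) (hT : Measurable T)
    (hYpv : ∀ ω, Yp ω = 1 ∨ Yp ω = -1) (hYmv : ∀ ω, Ym ω = 1 ∨ Ym ω = -1)
    (hTv : ∀ ω, T ω = 1 ∨ T ω = -1)
    (mono : ∀ ω, Ym ω ≤ Yp ω)
    (hT12 : μ[{ω | T ω = 1}.indicator (fun _ => (1 : ℝ)) |
        MeasurableSpace.comap (fun ω => (X ω, Yp ω, Ym ω)) inferInstance]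
      =ᵐ[μ] fun _ => 1 / 2)
    (Y : Ω → ℝ) (hY : ∀ ω, Y ω = if T ω = 1 then Yp ω else Ym ω) :
    ∀ z : ℝ, z = 1 ∨ z = -1 →
      μ[{ω | Y ω * T ω = z}.indicator (fun _ => (1 : ℝ)) |
          MeasurableSpace.comap X inferInstance]
        =ᵐ[μ] fun ω =>
          (1 + z * (μ[{ω | Ym ω < Yp ω}.indicator (fun _ => (1 : ℝ)) |
            MeasurableSpace.comap X inferInstance]) ω) / 2 := by
  classical
  rename_i mΩ probμ
  intro z hz
  have hWm : Measurable (fun ω => (X ω, Yp ω, Ym ω) : Ω → (Fin p → ℝ) × ℝ × ℝ) :=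
    hX.prodMk (hYp.prodMk hYm)
  have hYmeas : Measurable Y := by
    have : Y = fun ω => if T ω = 1 then Yp ω else Ym ω := funext hY
    rw [this]
    exact Measurable.ite (hT (measurableSet_singleton 1)) hYp hYm
  -- measurable sets (w.r.t. ambient σ-algebra)
  have hsZ : MeasurableSet {ω | Y ω * T ω = z} := (hYmeas.mul hT) (measurableSet_singleton z)
  have hsT : MeasurableSet {ω | T ω = 1} := hT (measurableSet_singleton 1)
  have hs1 : MeasurableSet {ω | Yp ω = z} := hYp (measurableSet_singleton z)
  have hs2 : MeasurableSet {ω | Ym ω = -z} := hYm (measurableSet_singleton (-z))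
  have hsR : MeasurableSet {ω | Ym ω < Yp ω} := measurableSet_lt hYm hYp
  have hind : ∀ (s : Set Ω), MeasurableSet s →
      Integrable (s.indicator (fun _ => (1 : ℝ))) μ :=
    fun s hs => (integrable_const (1 : ℝ)).indicator hs
  set W : Ω → (Fin p → ℝ) × ℝ × ℝ := fun ω => (X ω, Yp ω, Ym ω) with hWdef
  set m : MeasurableSpace Ω := MeasurableSpace.comap X inferInstance with hmdef
  set m' : MeasurableSpace Ω := MeasurableSpace.comap W inferInstance with hm'def
  have hm'0 : m' ≤ mΩ := hWm.comap_le
  have hm0 : m ≤ mΩ := hX.comap_le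
  have hmm' : m ≤ m' := by
    have hXW : X = (fun q : (Fin p → ℝ) × ℝ × ℝ => q.1) ∘ W := rfl
    rw [hmdef, hXW, ← MeasurableSpace.comap_comp]
    exact MeasurableSpace.comap_mono measurable_fst.comap_le
  -- functions
  set iZ : Ω → ℝ := {ω | Y ω * T ω = z}.indicator (fun _ => (1 : ℝ)) with hiZ
  set iT : Ω → ℝ := {ω | T ω = 1}.indicator (fun _ => (1 : ℝ)) with hiT
  set g1 : Ω → ℝ := {ω | Yp ω = z}.indicator (fun _ => (1 : ℝ)) with hg1
  set g2 : Ω → ℝ := {ω | Ym ω = -z}.indicator (fun _ => (1 : ℝ)) with hg2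
  set iR : Ω → ℝ := {ω | Ym ω < Yp ω}.indicator (fun _ => (1 : ℝ)) with hiR
  -- m'-measurable sets
  have hs1' : MeasurableSet[m'] {ω | Yp ω = z} :=
    ⟨{q : (Fin p → ℝ) × ℝ × ℝ | q.2.1 = z},
      (measurable_fst.comp measurable_snd) (measurableSet_singleton z), rfl⟩
  have hs2' : MeasurableSet[m'] {ω | Ym ω = -z} :=
    ⟨{q : (Fin p → ℝ) × ℝ × ℝ | q.2.2 = -z},
      (measurable_snd.comp measurable_snd) (measurableSet_singleton (-z)), rfl⟩
  -- integrability
  have hiZint : Integrable iZ μ := hind _ hsZ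
  have hiTint : Integrable iT μ := hind _ hsT
  have hg1int : Integrable g1 μ := hind _ hs1
  have hg2int : Integrable g2 μ := hind _ hs2
  have hiRint : Integrable iR μ := hind _ hsR
  have hprodint : Integrable ((g1 - g2) * iT) μ := by
    refine (integrable_const (2 : ℝ)).mono'
      (((hg1int.1.sub hg2int.1).mul hiTint.1)) (ae_of_all μ fun ω => ?_)
    simp only [Pi.mul_apply, Pi.sub_apply, hg1, hg2, hiT, Set.indicator_apply]
    split_ifs <;> norm_num
  -- strong measurability w.r.t. m'
  have hsm12 : StronglyMeasurable[m'] (g1 - g2) :=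
    ((stronglyMeasurable_const.indicator hs1')).sub
      ((stronglyMeasurable_const.indicator hs2'))
  have hsm2 : StronglyMeasurable[m'] g2 := stronglyMeasurable_const.indicator hs2'
  -- pointwise decomposition
  have hpt : iZ = (g1 - g2) * iT + g2 := by
    funext ω
    simp only [Pi.add_apply, Pi.mul_apply, Pi.sub_apply, hiZ, hiT, hg1, hg2,
      Set.indicator_apply, Set.mem_setOf_eq, hY ω]
    rcases hTv ω with h | h
    · simp only [h, if_true, mul_one]
      split_ifs <;> ring
    · have h1 : ¬ ((-1 : ℝ) = 1) := by norm_num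
      simp only [h, if_neg h1]
      by_cases hc : Ym ω = -z
      · rw [if_pos (show Ym ω * -1 = z by rw [hc]; ring), if_pos hc]; ring
      · rw [if_neg (fun hh => hc (by linarith)), if_neg hc]; ring
  -- conditional expectation w.r.t. m'
  have h1 : μ[iZ | m'] =ᵐ[μ] (g1 - g2) * (fun _ => (1 : ℝ) / 2) + g2 := by
    rw [hpt]
    refine (condExp_add hprodint hg2int m').trans ?_
    have ha : μ[(g1 - g2) * iT | m'] =ᵐ[μ] (g1 - g2) * μ[iT | m'] :=
      condExp_mul_of_stronglyMeasurable_left hsm12 hprodint hiTint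
    have hb : μ[g2 | m'] = g2 := condExp_of_stronglyMeasurable hm'0 hsm2 hg2int
    have hc : (g1 - g2) * μ[iT | m'] =ᵐ[μ] (g1 - g2) * (fun _ => (1 : ℝ) / 2) := by
      filter_upwards [hT12] with ω hω
      simp only [Pi.mul_apply, hω]
    filter_upwards [ha, hc] with ω hωa hωc
    simp only [Pi.add_apply] at *
    rw [hωa, hωc, hb]
  -- pointwise identity using monotonicity
  have hpt2 : (g1 - g2) * (fun _ => (1 : ℝ) / 2) + g2
      = (fun _ => (1 : ℝ) / 2) + (z / 2) • iR := by
    funext ω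
    simp only [Pi.add_apply, Pi.mul_apply, Pi.sub_apply, Pi.smul_apply, smul_eq_mul,
      hg1, hg2, hiR, Set.indicator_apply, Set.mem_setOf_eq]
    rcases hYpv ω with hp | hp <;> rcases hYmv ω with hq | hq <;>
      rcases hz with hz | hz <;> subst hz <;>
      simp only [hp, hq] <;> norm_num <;>
      exact absurd (mono ω) (by rw [hp, hq]; norm_num)
  -- tower property
  have h2 : μ[iZ | m] =ᵐ[μ] μ[(fun _ => (1 : ℝ) / 2) + (z / 2) • iR | m] := by
    have ht : μ[μ[iZ | m'] | m] =ᵐ[μ] μ[iZ | m] := condExp_condExp_of_le hmm' hm'0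
    refine ht.symm.trans ?_
    refine (condExp_congr_ae h1).trans ?_
    rw [hpt2]
  -- compute
  have h3 : μ[(fun _ => (1 : ℝ) / 2) + (z / 2) • iR | m]
      =ᵐ[μ] (fun _ => (1 : ℝ) / 2) + (z / 2) • μ[iR | m] := by
    refine (condExp_add (integrable_const _) (hiRint.smul (z / 2)) m).trans ?_
    have hc : μ[(fun _ => (1 : ℝ) / 2) | m] = fun _ => (1 : ℝ) / 2 := condExp_const hm0 _
    have hs : μ[(z / 2) • iR | m] =ᵐ[μ] (z / 2) • μ[iR | m] := condExp_smul _ _ _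
    filter_upwards [hs] with ω hω
    simp only [Pi.add_apply, hc, hω]
  refine (h2.trans h3).trans (ae_of_all μ fun ω => ?_)
  simp only [Pi.add_apply, Pi.smul_apply, smul_eq_mul]
  ring
end

section
/- If Q = 1/2 and monotonicity holds, then E[Z | X] = ρ(X) and hence E[Z] = P(R = +1); i.e., the mean of the observable label YT equals the responder rate. -/
open MeasureTheory

private lemma integrable_of_bound' {Ω : Type*} [MeasurableSpace Ω] {μ : Measure Ω}
    [IsProbabilityMeasure μ] {f : Ω → ℝ} (hf : Measurable f) (C : ℝ)
    (hC : ∀ ω, |f ω| ≤ C) : Integrable f μ :=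
  (integrable_const C).mono' hf.aestronglyMeasurable (Filter.Eventually.of_forall hC)

private lemma main_aux_s19 {Ω : Type*} {m2 mX : MeasurableSpace Ω} [m0 : MeasurableSpace Ω]
    (hle1 : mX ≤ m2) (hle2 : m2 ≤ m0) (μ : Measure Ω) [IsProbabilityMeasure μ]
    (Yp Ym T : Ω → ℝ) (hYp : Measurable Yp) (hYm : Measurable Ym)
    (hT : Measurable T)
    (hYp2 : Measurable[m2] Yp) (hYm2 : Measurable[m2] Ym)
    (hYpv : ∀ ω, Yp ω = 1 ∨ Yp ω = -1) (hYmv : ∀ ω, Ym ω = 1 ∨ Ym ω = -1)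
    (hTv : ∀ ω, T ω = 1 ∨ T ω = -1)
    (mono : ∀ ω, Ym ω ≤ Yp ω)
    (hT12 : μ[{ω | T ω = 1}.indicator (fun _ => (1 : ℝ)) | m2] =ᵐ[μ] fun _ => 1 / 2)
    (Y : Ω → ℝ) (hY : ∀ ω, Y ω = if T ω = 1 then Yp ω else Ym ω) :
    (μ[fun ω => Y ω * T ω | mX]
      =ᵐ[μ] μ[{ω | Ym ω < Yp ω}.indicator (fun _ => (1 : ℝ)) | mX]) ∧
    (∫ ω, Y ω * T ω ∂μ) = (μ {ω | Ym ω < Yp ω}).toReal := by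
  classical
  haveI : SigmaFinite (μ.trim hle2) := by
    have : IsFiniteMeasure (μ.trim hle2) := isFiniteMeasure_trim hle2
    infer_instance
  have hYmeas : Measurable Y := by
    have : Y = fun ω => if T ω = 1 then Yp ω else Ym ω := funext hY
    rw [this]
    exact Measurable.ite (hT (measurableSet_singleton 1)) hYp hYm
  have hAmeas : MeasurableSet {ω | T ω = 1} := hT (measurableSet_singleton 1)
  set ind : Ω → ℝ := {ω | T ω = 1}.indicator (fun _ => (1 : ℝ)) with hind
  have hindm : Measurable ind := (measurable_const).indicator hAmeas
  set g : Ω → ℝ := {ω | Ym ω < Yp ω}.indicator (fun _ => (1 : ℝ)) with hg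
  have hgset : MeasurableSet {ω | Ym ω < Yp ω} := measurableSet_lt hYm hYp
  -- pointwise identity Z = (Yp+Ym)*ind - Ym
  have hZ : (fun ω => Y ω * T ω)
      = (fun ω => (Yp ω + Ym ω) * ind ω - Ym ω) := by
    funext ω
    have hival : ind ω = if T ω = 1 then 1 else 0 := by
      rw [hind, Set.indicator_apply]; rfl
    rcases hTv ω with h | h
    · rw [hY ω, if_pos h, hival, if_pos h, h]; ring
    · have hne : T ω ≠ 1 := by rw [h]; norm_num
      rw [hY ω, if_neg hne, hival, if_neg hne, h]; ring
  -- pointwise identity (Yp+Ym)*(1/2) - Ym = g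
  have hgpt : ∀ ω, (Yp ω + Ym ω) * (1 / 2) - Ym ω = g ω := by
    intro ω
    have hgval : g ω = if Ym ω < Yp ω then 1 else 0 := by
      rw [hg, Set.indicator_apply]; rfl
    rw [hgval]
    rcases hYpv ω with hp | hp <;> rcases hYmv ω with hm | hm <;>
      simp only [hp, hm] <;> norm_num
    exact absurd (mono ω) (by rw [hp, hm]; norm_num)
  -- integrability
  have hYint : Integrable (fun ω => Y ω * T ω) μ := by
    apply integrable_of_bound' (hYmeas.mul hT) 1
    intro ω
    rw [Pi.mul_apply, abs_mul]
    have hYv : Y ω = 1 ∨ Y ω = -1 := by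
      rw [hY ω]; split_ifs; exacts [hYpv ω, hYmv ω]
    rcases hTv ω with h | h <;> rcases hYv with h2 | h2 <;> rw [h, h2] <;> norm_num
  have hYmint : Integrable Ym μ := by
    apply integrable_of_bound' hYm 1
    intro ω; rcases hYmv ω with h | h <;> rw [h] <;> norm_num
  have hindint : Integrable ind μ := by
    apply integrable_of_bound' hindm 1
    intro ω; rw [hind, Set.indicator_apply]; split_ifs <;> norm_num
  have hmulint : Integrable (fun ω => (Yp ω + Ym ω) * ind ω) μ := by
    apply integrable_of_bound' ((hYp.add hYm).mul hindm) 2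
    intro ω
    rw [Pi.mul_apply, Pi.add_apply, abs_mul]
    have h1 : |Yp ω + Ym ω| ≤ 2 := by
      rcases hYpv ω with h | h <;> rcases hYmv ω with h2 | h2 <;> rw [h, h2] <;> norm_num
    have h2 : |ind ω| ≤ 1 := by
      rw [hind, Set.indicator_apply]; split_ifs <;> norm_num
    calc |Yp ω + Ym ω| * |ind ω| ≤ 2 * 1 :=
          mul_le_mul h1 h2 (abs_nonneg _) (by norm_num)
      _ = 2 := by norm_num
  -- conditional expectation w.r.t. m2 equals g
  have key : μ[fun ω => Y ω * T ω | m2] =ᵐ[μ] g := by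
    rw [hZ]
    have h1 : μ[(fun ω => (Yp ω + Ym ω) * ind ω - Ym ω) | m2]
        =ᵐ[μ] μ[(fun ω => (Yp ω + Ym ω) * ind ω) | m2] - μ[Ym | m2] := by
      have := condExp_sub (m := m2) (μ := μ)
        (f := fun ω => (Yp ω + Ym ω) * ind ω) (g := Ym) hmulint hYmint
      exact this
    have h2 : μ[(fun ω => (Yp ω + Ym ω) * ind ω) | m2]
        =ᵐ[μ] (fun ω => Yp ω + Ym ω) * μ[ind | m2] := by
      have := condExp_mul_of_stronglyMeasurable_left (m := m2) (μ := μ)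
        (f := fun ω => Yp ω + Ym ω) (g := ind)
        ((hYp2.add hYm2).stronglyMeasurable) hmulint hindint
      exact this
    have h3 : μ[Ym | m2] = Ym :=
      condExp_of_stronglyMeasurable hle2 hYm2.stronglyMeasurable hYmint
    filter_upwards [h1, h2, hT12] with ω e1 e2 e4
    have e4' : (μ[ind | m2]) ω = 1 / 2 := e4
    rw [e1]
    simp only [Pi.sub_apply]
    rw [e2, h3]
    simp only [Pi.mul_apply]
    rw [e4']
    exact hgpt ω
  refine ⟨?_, ?_⟩
  · calc μ[fun ω => Y ω * T ω | mX]
        =ᵐ[μ] μ[μ[fun ω => Y ω * T ω | m2] | mX] :=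
          (condExp_condExp_of_le hle1 hle2).symm
      _ =ᵐ[μ] μ[g | mX] := condExp_congr_ae key
  · have h1 : ∫ ω, Y ω * T ω ∂μ = ∫ ω, (μ[fun ω => Y ω * T ω | m2]) ω ∂μ :=
      (integral_condExp hle2 (f := fun ω => Y ω * T ω)).symm
    rw [h1, integral_congr_ae key, hg]
    rw [MeasureTheory.integral_indicator_const (1 : ℝ) hgset]
    simp
    rfl

/-- If `Q = 1/2` and monotonicity holds, then `E[Z | X] = ρ(X)` almost surely and hence
`E[Z] = P(R = +1)`: the mean of the observable label `YT` equals the responder rate. -/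
theorem stmt_19 {Ω : Type*} [MeasurableSpace Ω] (μ : Measure Ω) [IsProbabilityMeasure μ]
    {p : ℕ} (X : Ω → (Fin p → ℝ)) (hX : Measurable X)
    (Yp Ym T : Ω → ℝ) (hYp : Measurable Yp) (hYm : Measurable Ym) (hT : Measurable T)
    (hYpv : ∀ ω, Yp ω = 1 ∨ Yp ω = -1) (hYmv : ∀ ω, Ym ω = 1 ∨ Ym ω = -1)
    (hTv : ∀ ω, T ω = 1 ∨ T ω = -1)
    (mono : ∀ ω, Ym ω ≤ Yp ω)
    (hT12 : μ[{ω | T ω = 1}.indicator (fun _ => (1 : ℝ)) |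
        MeasurableSpace.comap (fun ω => (X ω, Yp ω, Ym ω)) inferInstance]
      =ᵐ[μ] fun _ => 1 / 2)
    (Y : Ω → ℝ) (hY : ∀ ω, Y ω = if T ω = 1 then Yp ω else Ym ω) :
    (μ[fun ω => Y ω * T ω | MeasurableSpace.comap X inferInstance]
      =ᵐ[μ] μ[{ω | Ym ω < Yp ω}.indicator (fun _ => (1 : ℝ)) |
        MeasurableSpace.comap X inferInstance]) ∧
    (∫ ω, Y ω * T ω ∂μ) = (μ {ω | Ym ω < Yp ω}).toReal := by
  have hbigm : Measurable (fun ω => (X ω, Yp ω, Ym ω)) := hX.prodMk (hYp.prodMk hYm)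
  have hle2 : MeasurableSpace.comap (fun ω => (X ω, Yp ω, Ym ω)) inferInstance
      ≤ ‹MeasurableSpace Ω› := hbigm.comap_le
  have hle1 : MeasurableSpace.comap X inferInstance
      ≤ MeasurableSpace.comap (fun ω => (X ω, Yp ω, Ym ω)) inferInstance := by
    rintro s ⟨t, ht, rfl⟩
    exact ⟨Prod.fst ⁻¹' t, measurable_fst ht, rfl⟩
  have hbig2 : Measurable[MeasurableSpace.comap (fun ω => (X ω, Yp ω, Ym ω)) inferInstance]
      (fun ω => (X ω, Yp ω, Ym ω)) := Measurable.of_comap_le le_rfl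
  have hYp2 := (measurable_fst.comp measurable_snd).comp hbig2
  have hYm2 := (measurable_snd.comp measurable_snd).comp hbig2
  exact main_aux_s19 hle1 hle2 μ Yp Ym T hYp hYm hT hYp2 hYm2 hYpv hYmv hTv mono hT12 Y hY
end
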